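/- arXiv:1401.2748 — 8 statements merged into one kernel-verified Lean document; each statement's English description precedes it below -/
import Mathlib

section
/- In A = F[X,Y]/(X^r,Y^s) with 1 \u2264 r \u2264 s, the elements w_i := \u2211_{j=0}^{i} (-1)^j x^{r-1-j} y^{s-1-i+j}, for 0 \u2264 i \u2264 r-1, form an F-basis of the annihilator Ann(x+y) = { a \u2208 A : a(x+y) = 0 }. In particular Ann(x+y) has F-dimension exactly r. -/
set_option synthInstance.maxHeartbeats 1000000
set_option maxHeartbeats 1000000


open MvPolynomial

/-- The ideal `(X^r, Y^s)` in `F[X,Y]`. -/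
noncomputable def Irs (F : Type*) [Field F] (r s : ℕ) : Ideal (MvPolynomial (Fin 2) F) :=
  Ideal.span {(X 0 : MvPolynomial (Fin 2) F) ^ r, (X 1 : MvPolynomial (Fin 2) F) ^ s}

/-- The quotient algebra `A = F[X,Y]/(X^r, Y^s)`. -/
noncomputable abbrev Aq (F : Type*) [Field F] (r s : ℕ) :=
  MvPolynomial (Fin 2) F ⧸ Irs F r s

/-- The image `x` of `X` in `A`. -/
noncomputable def xq (F : Type*) [Field F] (r s : ℕ) : Aq F r s :=
  Ideal.Quotient.mk (Irs F r s) (X 0)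

/-- The image `y` of `Y` in `A`. -/
noncomputable def yq (F : Type*) [Field F] (r s : ℕ) : Aq F r s :=
  Ideal.Quotient.mk (Irs F r s) (X 1)

/-- `w_i = ∑_{j=0}^{i} (-1)^j x^{r-1-j} y^{s-1-i+j}`. -/
noncomputable def wq (F : Type*) [Field F] (r s : ℕ) (i : ℕ) : Aq F r s :=
  ∑ j ∈ Finset.range (i + 1),
    (-1 : Aq F r s) ^ j * (xq F r s ^ (r - 1 - j) * yq F r s ^ (s - 1 - i + j))

namespace Stmt2Aux
variable {F : Type*} [Field F] {r s : ℕ}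

noncomputable def ee (a b : ℕ) : Fin 2 →₀ ℕ := Finsupp.single 0 a + Finsupp.single 1 b
@[simp] lemma ee_apply0 (a b : ℕ) : ee a b 0 = a := by simp [ee, Finsupp.single_apply]
@[simp] lemma ee_apply1 (a b : ℕ) : ee a b 1 = b := by simp [ee, Finsupp.single_apply]
lemma ee_eq_iff {a b p q : ℕ} : ee a b = ee p q ↔ a = p ∧ b = q := by
  constructor
  · intro h
    exact ⟨by simpa using congrArg (fun f => f 0) h, by simpa using congrArg (fun f => f 1) h⟩
  · rintro ⟨rfl, rfl⟩; rfl
lemma eq_ee (m : Fin 2 →₀ ℕ) : m = ee (m 0) (m 1) := by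
  ext i; fin_cases i <;> simp [ee, Finsupp.single_apply]
lemma ee_add_single0 (a b k : ℕ) : ee a b + Finsupp.single 0 k = ee (a + k) b := by
  ext i; fin_cases i <;> simp [ee, Finsupp.single_apply]
lemma ee_add_single1 (a b k : ℕ) : ee a b + Finsupp.single 1 k = ee a (b + k) := by
  ext i; fin_cases i <;> simp [ee, Finsupp.single_apply]
lemma X0_pow_mem : (X 0 : MvPolynomial (Fin 2) F) ^ r ∈ Irs F r s := Ideal.subset_span (by simp)
lemma X1_pow_mem : (X 1 : MvPolynomial (Fin 2) F) ^ s ∈ Irs F r s := Ideal.subset_span (by simp)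
lemma coeff_eq_zero_of_mem {q : MvPolynomial (Fin 2) F} (hq : q ∈ Irs F r s)
    {m : Fin 2 →₀ ℕ} (h0 : m 0 < r) (h1 : m 1 < s) : coeff m q = 0 := by
  rw [Irs, Ideal.mem_span_pair] at hq
  obtain ⟨u, v, huv⟩ := hq
  rw [← huv, coeff_add, X_pow_eq_monomial, X_pow_eq_monomial, coeff_mul_monomial',
    coeff_mul_monomial', if_neg, if_neg, add_zero]
  · intro h; have := h 1; rw [Finsupp.single_apply] at this; simp at this; omega
  · intro h; have := h 0; rw [Finsupp.single_apply] at this; simp at this; omega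
lemma mk_monomial (a b : ℕ) :
    Ideal.Quotient.mk (Irs F r s) (monomial (ee a b) (1 : F)) = xq F r s ^ a * yq F r s ^ b := by
  rw [xq, yq, ← map_pow, ← map_pow, ← map_mul]
  congr 1
  rw [X_pow_eq_monomial, X_pow_eq_monomial, monomial_mul, mul_one]; rfl
lemma xq_pow_r : xq F r s ^ r = 0 := by
  rw [xq, ← map_pow, Ideal.Quotient.eq_zero_iff_mem]; exact X0_pow_mem
lemma yq_pow_s : yq F r s ^ s = 0 := by
  rw [yq, ← map_pow, Ideal.Quotient.eq_zero_iff_mem]; exact X1_pow_mem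

-- new stuff
lemma mk_smul (c : F) (q : MvPolynomial (Fin 2) F) :
    Ideal.Quotient.mk (Irs F r s) (c • q) = c • Ideal.Quotient.mk (Irs F r s) q := by
  rw [← Ideal.Quotient.mkₐ_eq_mk F, map_smul]

/-- the polynomial representative of `wq`. -/
noncomputable def Wp (F : Type*) [Field F] (r s i : ℕ) : MvPolynomial (Fin 2) F :=
  ∑ j ∈ Finset.range (i + 1), (-1 : F) ^ j • monomial (ee (r - 1 - j) (s - 1 - i + j)) 1

lemma mk_Wp (i : ℕ) : Ideal.Quotient.mk (Irs F r s) (Wp F r s i) = wq F r s i := by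
  rw [Wp, wq, map_sum]
  refine Finset.sum_congr rfl fun j _ => ?_
  rw [smul_eq_C_mul, map_mul, mk_monomial]
  congr 1
  rw [show ((-1 : F) ^ j) = ((-1 : F)) ^ j from rfl, map_pow, map_neg, map_one, map_pow,
    map_neg, map_one]

lemma span_box_top (r s : ℕ) :
    Submodule.span F (Set.range (fun p : Fin r × Fin s =>
      xq F r s ^ (p.1 : ℕ) * yq F r s ^ (p.2 : ℕ))) = ⊤ := by
  rw [eq_top_iff]
  rintro a -
  obtain ⟨P, rfl⟩ := Ideal.Quotient.mk_surjective a
  induction P using MvPolynomial.induction_on' with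
  | add p q hp hq => rw [map_add]; exact add_mem hp hq
  | monomial u c =>
    by_cases h0 : u 0 < r
    · by_cases h1 : u 1 < s
      · have hm : (monomial u c : MvPolynomial (Fin 2) F) = c • monomial u 1 := by
          rw [smul_monomial, smul_eq_mul, mul_one]
        rw [hm, mk_smul, eq_ee u, mk_monomial]
        exact Submodule.smul_mem _ _
          (Submodule.subset_span ⟨(⟨u 0, h0⟩, ⟨u 1, h1⟩), rfl⟩)
      · have hmem : (monomial u c : MvPolynomial (Fin 2) F) ∈ Irs F r s := by
          have hu : (monomial u c : MvPolynomial (Fin 2) F)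
              = monomial (ee (u 0) (u 1 - s)) c * (X 1) ^ s := by
            conv_lhs => rw [eq_ee u]
            rw [X_pow_eq_monomial, monomial_mul, mul_one, ee_add_single1,
              show u 1 - s + s = u 1 by omega]
          rw [hu]
          exact Ideal.mul_mem_left _ _ X1_pow_mem
        rw [Ideal.Quotient.eq_zero_iff_mem.2 hmem]
        exact zero_mem _
    · have hmem : (monomial u c : MvPolynomial (Fin 2) F) ∈ Irs F r s := by
        have hu : (monomial u c : MvPolynomial (Fin 2) F)
            = monomial (ee (u 0 - r) (u 1)) c * (X 0) ^ r := by
          conv_lhs => rw [eq_ee u]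
          rw [X_pow_eq_monomial, monomial_mul, mul_one, ee_add_single0,
            show u 0 - r + r = u 0 by omega]
        rw [hu]
        exact Ideal.mul_mem_left _ _ X0_pow_mem
      rw [Ideal.Quotient.eq_zero_iff_mem.2 hmem]
      exact zero_mem _

lemma coeff_box_sum (c : Fin r × Fin s → F) (a b : ℕ) :
    coeff (ee a b) (∑ p : Fin r × Fin s, c p • monomial (ee (p.1 : ℕ) (p.2 : ℕ)) (1 : F)) =
      if h : a < r ∧ b < s then c (⟨a, h.1⟩, ⟨b, h.2⟩) else 0 := by
  rw [coeff_sum]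
  simp_rw [coeff_smul, coeff_monomial]
  split
  · next h =>
    rw [Finset.sum_eq_single ((⟨a, h.1⟩, ⟨b, h.2⟩) : Fin r × Fin s)]
    · rw [if_pos rfl, smul_eq_mul, mul_one]
    · intro p _ hp
      rw [if_neg, smul_zero]
      intro he
      apply hp
      obtain ⟨h1, h2⟩ := ee_eq_iff.1 he
      exact Prod.ext (Fin.ext h1) (Fin.ext h2)
    · intro h; exact absurd (Finset.mem_univ _) h
  · next h =>
    refine Finset.sum_eq_zero fun p _ => ?_
    rw [if_neg, smul_zero]
    intro he
    obtain ⟨h1, h2⟩ := ee_eq_iff.1 he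
    exact h ⟨h1 ▸ p.1.isLt, h2 ▸ p.2.isLt⟩

lemma ee_sub_single0 (p q : ℕ) : ee p q - Finsupp.single 0 1 = ee (p - 1) q := by
  ext i; fin_cases i <;> simp [ee, Finsupp.single_apply, Finsupp.tsub_apply]

lemma ee_sub_single1 (p q : ℕ) : ee p q - Finsupp.single 1 1 = ee p (q - 1) := by
  ext i; fin_cases i <;> simp [ee, Finsupp.single_apply, Finsupp.tsub_apply]

lemma coeff_sum_Wp_eq (hr : 1 ≤ r) (hrs : r ≤ s) (t : Fin r → F) {a b : ℕ} (i0 : Fin r)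
    (ha : a < r) (hb : b < s) (hab : s - 1 ≤ a + b) (hi : (i0 : ℕ) = r + s - 2 - (a + b)) :
    coeff (ee a b) (∑ i : Fin r, t i • Wp F r s i) = (-1 : F) ^ (r - 1 - a) * t i0 := by
  rw [coeff_sum]
  simp_rw [coeff_smul, Wp, coeff_sum, coeff_smul, coeff_monomial, smul_eq_mul]
  rw [Finset.sum_eq_single i0]
  · rw [Finset.sum_eq_single (r - 1 - a)]
    · rw [if_pos (ee_eq_iff.2 ⟨by omega, by have := i0.isLt; omega⟩)]
      ring
    · intro j hj hne
      rw [Finset.mem_range] at hj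
      rw [if_neg, mul_zero]
      intro he
      obtain ⟨h1, h2⟩ := ee_eq_iff.1 he
      have := i0.isLt
      omega
    · intro hnot
      exfalso
      apply hnot
      rw [Finset.mem_range]
      have := i0.isLt
      omega
  · intro i _ hne
    rw [Finset.sum_eq_zero, mul_zero]
    intro j hj
    rw [Finset.mem_range] at hj
    rw [if_neg, mul_zero]
    intro he
    obtain ⟨h1, h2⟩ := ee_eq_iff.1 he
    apply hne
    apply Fin.ext
    have := i.isLt
    omega
  · intro h; exact absurd (Finset.mem_univ _) h

lemma coeff_sum_Wp_zero (hr : 1 ≤ r) (hrs : r ≤ s) (t : Fin r → F) {a b : ℕ}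
    (h : ¬(a < r ∧ b < s ∧ s - 1 ≤ a + b)) :
    coeff (ee a b) (∑ i : Fin r, t i • Wp F r s i) = 0 := by
  rw [coeff_sum]
  simp_rw [coeff_smul, Wp, coeff_sum, coeff_smul, coeff_monomial, smul_eq_mul]
  refine Finset.sum_eq_zero fun i _ => ?_
  rw [Finset.sum_eq_zero, mul_zero]
  intro j hj
  rw [Finset.mem_range] at hj
  rw [if_neg, mul_zero]
  intro he
  obtain ⟨h1, h2⟩ := ee_eq_iff.1 he
  have := i.isLt
  omega

lemma wq_mul_zero (hr : 1 ≤ r) (hrs : r ≤ s) {i : ℕ} (hi : i < r) :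
    wq F r s i * (xq F r s + yq F r s) = 0 := by
  rw [wq, Finset.sum_mul]
  have key : ∀ j ∈ Finset.range (i + 1),
      (-1 : Aq F r s) ^ j * (xq F r s ^ (r - 1 - j) * yq F r s ^ (s - 1 - i + j))
          * (xq F r s + yq F r s)
      = (-1 : Aq F r s) ^ j * (xq F r s ^ (r - j) * yq F r s ^ (s - 1 - i + j))
        + (-1 : Aq F r s) ^ j * (xq F r s ^ (r - 1 - j) * yq F r s ^ (s - i + j)) := by
    intro j hj
    rw [Finset.mem_range] at hj
    rw [show r - j = (r - 1 - j) + 1 by omega, show s - i + j = (s - 1 - i + j) + 1 by omega,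
      pow_succ, pow_succ]
    ring
  rw [Finset.sum_congr rfl key, Finset.sum_add_distrib,
    Finset.sum_range_succ' _ i, Finset.sum_range_succ]
  have h0 : (-1 : Aq F r s) ^ 0 * (xq F r s ^ (r - 0) * yq F r s ^ (s - 1 - i + 0)) = 0 := by
    simp [xq_pow_r]
  have hlast : (-1 : Aq F r s) ^ i * (xq F r s ^ (r - 1 - i) * yq F r s ^ (s - i + i)) = 0 := by
    rw [show s - i + i = s by omega, yq_pow_s]
    ring
  rw [h0, hlast, add_zero, add_zero]
  have hcongr : ∀ j ∈ Finset.range i,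
      (-1 : Aq F r s) ^ (j + 1) * (xq F r s ^ (r - (j + 1)) * yq F r s ^ (s - 1 - i + (j + 1)))
      = -((-1 : Aq F r s) ^ j * (xq F r s ^ (r - 1 - j) * yq F r s ^ (s - i + j))) := by
    intro j hj
    rw [show r - (j + 1) = r - 1 - j by omega, show s - 1 - i + (j + 1) = s - i + j by omega,
      pow_succ]
    ring
  rw [Finset.sum_congr rfl hcongr, Finset.sum_neg_distrib]
  ring

section Comb
variable (C : ℕ → ℕ → F)

lemma comb_zero (hr : 1 ≤ r)
    (Rel : ∀ p q, p < r → q < s →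
      (if p = 0 then 0 else C (p - 1) q) + (if q = 0 then 0 else C p (q - 1)) = 0) :
    ∀ a b, a < r → b < s → a + b + 1 < s → C a b = 0 := by
  intro a
  induction a with
  | zero =>
    intro b hb hbs hlt
    have h := Rel 0 (b + 1) hr (by omega)
    simpa using h
  | succ n ih =>
    intro b hb hbs hlt
    have h := Rel (n + 1) (b + 1) hb (by omega)
    rw [if_neg (by omega), if_neg (by omega)] at h
    simp only [Nat.add_sub_cancel] at h
    have h2 := ih (b + 1) (by omega) (by omega) (by omega)
    rw [h2, zero_add] at h
    exact h

lemma comb_diag (hr : 1 ≤ r) (hrs : r ≤ s)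
    (Rel : ∀ p q, p < r → q < s →
      (if p = 0 then 0 else C (p - 1) q) + (if q = 0 then 0 else C p (q - 1)) = 0) :
    ∀ k a b, a < r → b < s → s - 1 ≤ a + b → a + k = r - 1 →
      C a b = (-1 : F) ^ k * C (r - 1) (a + b - (r - 1)) := by
  intro k
  induction k with
  | zero =>
    intro a b ha hb hab hk
    rw [show a = r - 1 by omega, pow_zero, one_mul,
      show r - 1 + b - (r - 1) = b by omega]
  | succ n ih =>
    intro a b ha hb hab hk
    have hb1 : 1 ≤ b := by omega
    have h := Rel (a + 1) b (by omega) hb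
    rw [if_neg (by omega), if_neg (by omega)] at h
    simp only [Nat.add_sub_cancel] at h
    have hih := ih (a + 1) (b - 1) (by omega) (by omega) (by omega) (by omega)
    have hC : C a b = -C (a + 1) (b - 1) := eq_neg_of_add_eq_zero_left h
    rw [hC, hih, show a + 1 + (b - 1) = a + b by omega, pow_succ]
    ring
end Comb

end Stmt2Aux

open Stmt2Aux

/-- The elements `w_0, …, w_{r-1}` form an `F`-basis of `Ann(x+y)`; in particular
`Ann(x+y)` has dimension `r`. -/
theorem stmt2 (F : Type*) [Field F] (r s : ℕ) (hr : 1 ≤ r) (hrs : r ≤ s) :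
    LinearIndependent F (fun i : Fin r => wq F r s i) ∧
    Submodule.span F (Set.range fun i : Fin r => wq F r s i) =
      LinearMap.ker (LinearMap.mulRight F (xq F r s + yq F r s)) ∧
    Module.finrank F
      (LinearMap.ker (LinearMap.mulRight F (xq F r s + yq F r s))) = r := by
  classical
  -- linear independence
  have hindep : LinearIndependent F (fun i : Fin r => wq F r s i) := by
    rw [Fintype.linearIndependent_iff]
    intro g hg i
    have hmk : Ideal.Quotient.mk (Irs F r s) (∑ i : Fin r, g i • Wp F r s i) = 0 := by
      rw [map_sum]
      simp_rw [mk_smul, mk_Wp]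
      exact hg
    rw [Ideal.Quotient.eq_zero_iff_mem] at hmk
    have hco := coeff_eq_zero_of_mem hmk (m := ee (r - 1) (s - 1 - (i : ℕ)))
      (by rw [ee_apply0]; omega) (by rw [ee_apply1]; have := i.isLt; omega)
    rw [coeff_sum_Wp_eq hr hrs g i (by omega) (by have := i.isLt; omega)
      (by have := i.isLt; omega) (by have := i.isLt; omega)] at hco
    rw [Nat.sub_self, pow_zero, one_mul] at hco
    exact hco
  have hspan : Submodule.span F (Set.range fun i : Fin r => wq F r s i) =
      LinearMap.ker (LinearMap.mulRight F (xq F r s + yq F r s)) := by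
    apply le_antisymm
    · rw [Submodule.span_le]
      rintro _ ⟨i, rfl⟩
      rw [SetLike.mem_coe, LinearMap.mem_ker, LinearMap.mulRight_apply]
      exact wq_mul_zero hr hrs i.isLt
    · intro a ha
      rw [LinearMap.mem_ker, LinearMap.mulRight_apply] at ha
      have hmem : a ∈ Submodule.span F (Set.range (fun p : Fin r × Fin s =>
          xq F r s ^ (p.1 : ℕ) * yq F r s ^ (p.2 : ℕ))) := by
        rw [span_box_top]; trivial
      obtain ⟨c, hc⟩ := (Submodule.mem_span_range_iff_exists_fun F).1 hmem
      set P : MvPolynomial (Fin 2) F :=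
        ∑ p : Fin r × Fin s, c p • monomial (ee (p.1 : ℕ) (p.2 : ℕ)) 1 with hP
      have hmkP : Ideal.Quotient.mk (Irs F r s) P = a := by
        rw [hP, map_sum]
        simp_rw [mk_smul, mk_monomial]
        exact hc
      have hPmul : P * (X 0 + X 1) ∈ Irs F r s := by
        rw [← Ideal.Quotient.eq_zero_iff_mem, map_mul, hmkP, map_add]
        exact ha
      set CC : ℕ → ℕ → F := fun a b =>
        if h : a < r ∧ b < s then c (⟨a, h.1⟩, ⟨b, h.2⟩) else 0 with hCC
      have hCP : ∀ a b, coeff (ee a b) P = CC a b := coeff_box_sum c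
      have Rel : ∀ p q, p < r → q < s →
          (if p = 0 then 0 else CC (p - 1) q) + (if q = 0 then 0 else CC p (q - 1)) = 0 := by
        intro p q hp hq
        have h := coeff_eq_zero_of_mem hPmul (m := ee p q)
          (by rw [ee_apply0]; omega) (by rw [ee_apply1]; omega)
        rw [mul_add, coeff_add, coeff_mul_X', coeff_mul_X'] at h
        rw [ee_sub_single0, ee_sub_single1, hCP, hCP] at h
        have hs0 : (0 ∈ (ee p q).support) ↔ ¬ (p = 0) := by
          simp [Finsupp.mem_support_iff]
        have hs1 : (1 ∈ (ee p q).support) ↔ ¬ (q = 0) := by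
          simp [Finsupp.mem_support_iff]
        rw [if_congr hs0 rfl rfl, if_congr hs1 rfl rfl, ite_not, ite_not] at h
        exact h
      set t : Fin r → F := fun i => CC (r - 1) (s - 1 - (i : ℕ)) with ht
      have hPW : P = ∑ i : Fin r, t i • Wp F r s i := by
        apply MvPolynomial.ext
        intro m
        rw [eq_ee m, hCP]
        by_cases h : m 0 < r ∧ m 1 < s ∧ s - 1 ≤ m 0 + m 1
        · obtain ⟨ha', hb', hab'⟩ := h
          rw [coeff_sum_Wp_eq hr hrs t ⟨r + s - 2 - (m 0 + m 1), by omega⟩ ha' hb' hab' rfl]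
          rw [ht]
          show CC (m 0) (m 1) = (-1 : F) ^ (r - 1 - m 0) *
            CC (r - 1) (s - 1 - (r + s - 2 - (m 0 + m 1)))
          rw [show s - 1 - (r + s - 2 - (m 0 + m 1)) = m 0 + m 1 - (r - 1) by omega]
          exact comb_diag CC hr hrs Rel (r - 1 - m 0) (m 0) (m 1) ha' hb' hab' (by omega)
        · rw [coeff_sum_Wp_zero hr hrs t h]
          by_cases ha' : m 0 < r ∧ m 1 < s
          · exact comb_zero CC hr Rel (m 0) (m 1) ha'.1 ha'.2 (by omega)
          · rw [hCC]
            exact dif_neg ha'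
      have : a = ∑ i : Fin r, t i • wq F r s i := by
        rw [← hmkP, hPW, map_sum]
        simp_rw [mk_smul, mk_Wp]
      rw [this]
      exact Submodule.sum_smul_mem _ _ fun i _ =>
        Submodule.subset_span ⟨i, rfl⟩
  refine ⟨hindep, hspan, ?_⟩
  rw [← hspan, finrank_span_eq_card hindep, Fintype.card_fin]
end

section
/- In A = F[X,Y]/(X^r,Y^s) with 1 \u2264 r \u2264 s, if n is the least positive integer with (x+y)^n = 0 (equivalently n = dim_F F[x+y]), then (x+y)^{n-1} = (-1)^{r-1} C(n-1, r-1) \u2211_{i=n-s}^{r-1} (-x)^i y^{n-1-i}, and the binomial coefficient C(n-1, r-1) is nonzero in F. -/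
open MvPolynomial Finset

lemma coeff_of_mem_Irs {F : Type*} [Field F] {r s : ℕ} {p : MvPolynomial (Fin 2) F}
    (hp : p ∈ Irs F r s) (m : Fin 2 →₀ ℕ) (h0 : m 0 < r) (h1 : m 1 < s) :
    coeff m p = 0 := by
  obtain ⟨u, v, huv⟩ := Ideal.mem_span_pair.mp hp
  have hx : ¬ (Finsupp.single (0 : Fin 2) r ≤ m) := by
    intro h; have := Finsupp.le_def.mp h 0; simp at this; omega
  have hy : ¬ (Finsupp.single (1 : Fin 2) s ≤ m) := by
    intro h; have := Finsupp.le_def.mp h 1; simp at this; omega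
  rw [← huv, coeff_add, X_pow_eq_monomial, X_pow_eq_monomial,
    coeff_mul_monomial', coeff_mul_monomial', if_neg hx, if_neg hy, add_zero]

lemma coeff_addpow {F : Type*} [Field F] (m k : ℕ) (hk : k ≤ m) :
    coeff (Finsupp.single (0 : Fin 2) k + Finsupp.single 1 (m - k))
      ((X 0 + X 1 : MvPolynomial (Fin 2) F) ^ m) = (m.choose k : F) := by
  rw [add_pow, coeff_sum]
  rw [Finset.sum_eq_single_of_mem k (Finset.mem_range.2 (Nat.lt_succ_of_le hk))]
  · rw [X_pow_eq_monomial, X_pow_eq_monomial, monomial_mul, mul_one,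
      show ((m.choose k : ℕ) : MvPolynomial (Fin 2) F) = C (m.choose k : F) by simp,
      mul_comm, C_mul_monomial, mul_one, coeff_monomial, if_pos rfl]
  · intro j hj hjk
    rw [X_pow_eq_monomial, X_pow_eq_monomial, monomial_mul, mul_one,
      show ((m.choose j : ℕ) : MvPolynomial (Fin 2) F) = C (m.choose j : F) by simp,
      mul_comm, C_mul_monomial, mul_one, coeff_monomial, if_neg]
    intro h
    have := DFunLike.congr_fun h 0
    simp [Finsupp.single_apply] at this
    exact hjk this

lemma xq_pow_eq_zero {F : Type*} [Field F] {r s : ℕ} {k : ℕ} (hk : r ≤ k) :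
    xq F r s ^ k = 0 := by
  have hx : xq F r s ^ r = 0 := by
    rw [xq, ← map_pow, Ideal.Quotient.eq_zero_iff_mem]
    exact Ideal.subset_span (by simp)
  calc xq F r s ^ k = xq F r s ^ r * xq F r s ^ (k - r) := by
        rw [← pow_add]; congr 1; omega
    _ = 0 := by rw [hx, zero_mul]

lemma yq_pow_eq_zero {F : Type*} [Field F] {r s : ℕ} {k : ℕ} (hk : s ≤ k) :
    yq F r s ^ k = 0 := by
  have hy : yq F r s ^ s = 0 := by
    rw [yq, ← map_pow, Ideal.Quotient.eq_zero_iff_mem]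
    exact Ideal.subset_span (by simp)
  calc yq F r s ^ k = yq F r s ^ s * yq F r s ^ (k - s) := by
        rw [← pow_add]; congr 1; omega
    _ = 0 := by rw [hy, zero_mul]

lemma neg_one_pow_sub {R : Type*} [Ring R] {a b : ℕ} (h : b ≤ a) :
    (-1 : R) ^ (a - b) = (-1) ^ a * (-1) ^ b := by
  symm
  rw [← pow_add, show a + b = (a - b) + 2 * b from by omega, pow_add, pow_mul]
  norm_num

lemma choose_zero_of_pow_zero {F : Type*} [Field F] {r s : ℕ} {m k : ℕ}
    (h : (xq F r s + yq F r s) ^ m = 0) (hkm : k ≤ m) (hkr : k < r) (hks : m - k < s) :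
    (m.choose k : F) = 0 := by
  have hadd : xq F r s + yq F r s = Ideal.Quotient.mk (Irs F r s) (X 0 + X 1) := rfl
  rw [hadd, ← map_pow, Ideal.Quotient.eq_zero_iff_mem] at h
  have h2 := coeff_of_mem_Irs h (Finsupp.single 0 k + Finsupp.single 1 (m - k))
    (by simp [Finsupp.single_apply]; omega) (by simp [Finsupp.single_apply]; omega)
  rwa [coeff_addpow m k hkm] at h2

/-- If `n` is the least positive integer with `(x+y)^n = 0`, then
`(x+y)^{n-1} = (-1)^{r-1} C(n-1,r-1) ∑_{i=n-s}^{r-1} (-x)^i y^{n-1-i}` and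
`C(n-1, r-1) ≠ 0` in `F`. -/
theorem stmt3 (F : Type*) [Field F] (r s : ℕ) (hr : 1 ≤ r) (hrs : r ≤ s)
    (n : ℕ) (hn : 0 < n) (h0 : (xq F r s + yq F r s) ^ n = 0)
    (hmin : ∀ m : ℕ, 0 < m → m < n → (xq F r s + yq F r s) ^ m ≠ 0) :
    (xq F r s + yq F r s) ^ (n - 1) =
      (-1 : Aq F r s) ^ (r - 1) * ((n - 1).choose (r - 1) : Aq F r s) *
        ∑ i ∈ Finset.Ico (n - s) r, (-(xq F r s)) ^ i * yq F r s ^ (n - 1 - i) ∧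
    ((n - 1).choose (r - 1) : F) ≠ 0 := by
  have hs : 1 ≤ s := hr.trans hrs
  -- n ≥ r
  have hrn : r ≤ n := by
    by_contra hc
    push_neg at hc
    have := choose_zero_of_pow_zero h0 (le_refl n) (by omega) (by omega)
    simp [Nat.choose_self] at this
  -- the chain lemma in F
  have chain : ∀ k, n - s ≤ k → k ≤ r - 1 →
      ((n - 1).choose k : F) = (-1) ^ (r - 1 - k) * ((n - 1).choose (r - 1) : F) := by
    have key : ∀ d, d ≤ (r - 1) - (n - s) →
        ((n - 1).choose (r - 1 - d) : F) = (-1) ^ d * ((n - 1).choose (r - 1) : F) := by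
      intro d
      induction d with
      | zero => intro _; simp
      | succ d ih =>
        intro hd
        have ihd := ih (by omega)
        set k := r - 1 - (d + 1) with hk
        have hk1 : k + 1 = r - 1 - d := by omega
        have hz : (n.choose (k + 1) : F) = 0 :=
          choose_zero_of_pow_zero h0 (by omega) (by omega) (by omega)
        have hpas : n.choose (k + 1) = (n - 1).choose k + (n - 1).choose (k + 1) := by
          conv_lhs => rw [show n = (n - 1) + 1 from by omega]
          rw [Nat.choose_succ_succ']
        rw [hpas] at hz
        push_cast at hz
        rw [hk1, ihd] at hz
        have : ((n - 1).choose k : F) = -((-1) ^ d * ((n - 1).choose (r - 1) : F)) :=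
          eq_neg_of_add_eq_zero_left hz
        rw [this, pow_succ]
        ring
    intro k hk1 hk2
    have := key (r - 1 - k) (by omega)
    rwa [show r - 1 - (r - 1 - k) = k by omega] at this
  -- cast the chain to Aq
  have chainA : ∀ k, n - s ≤ k → k < r →
      (((n - 1).choose k : ℕ) : Aq F r s)
        = (-1) ^ (r - 1) * (-1) ^ k * (((n - 1).choose (r - 1) : ℕ) : Aq F r s) := by
    intro k hk1 hk2
    have hF := chain k hk1 (by omega)
    have := congrArg (algebraMap F (Aq F r s)) hF
    rw [map_natCast, map_mul, map_pow, map_neg, map_one, map_natCast] at this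
    rw [this, neg_one_pow_sub (show k ≤ r - 1 from by omega)]
  -- expansion of t^(n-1)
  have hexp : (xq F r s + yq F r s) ^ (n - 1)
      = ∑ k ∈ Finset.Ico (n - s) r,
          xq F r s ^ k * yq F r s ^ (n - 1 - k) * (((n - 1).choose k : ℕ) : Aq F r s) := by
    rw [add_pow]
    rw [show n - 1 + 1 = n from by omega]
    rw [← Finset.sum_subset (s₁ := Finset.Ico (n - s) r) (fun k hk => by
        simp only [Finset.mem_Ico] at hk; exact Finset.mem_range.2 (by omega))]
    intro k hk hk2
    simp only [Finset.mem_range, Finset.mem_Ico, not_and, not_lt] at hk hk2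
    by_cases hkr : r ≤ k
    · rw [xq_pow_eq_zero hkr, zero_mul, zero_mul]
    · have : k < n - s := by omega
      rw [yq_pow_eq_zero (show s ≤ n - 1 - k by omega), mul_zero, zero_mul]
  have main : (xq F r s + yq F r s) ^ (n - 1) =
      (-1 : Aq F r s) ^ (r - 1) * ((n - 1).choose (r - 1) : Aq F r s) *
        ∑ i ∈ Finset.Ico (n - s) r, (-(xq F r s)) ^ i * yq F r s ^ (n - 1 - i) := by
    rw [hexp, Finset.mul_sum]
    apply Finset.sum_congr rfl
    intro k hk
    simp only [Finset.mem_Ico] at hk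
    rw [chainA k hk.1 hk.2, neg_pow (xq F r s)]
    ring
  refine ⟨main, ?_⟩
  -- nonzero
  by_cases hr1 : r = 1
  · subst hr1; simp
  · intro hzero
    have hne := hmin (n - 1) (by omega) (by omega)
    apply hne
    rw [main]
    have : (((n - 1).choose (r - 1) : ℕ) : Aq F r s) = 0 := by
      have := congrArg (algebraMap F (Aq F r s)) hzero
      rwa [map_natCast, map_zero] at this
    rw [this, mul_zero, zero_mul]
end

section
/- For any field F of characteristic p \u2265 0 and 1 \u2264 r \u2264 s, the Jordan partition \u03bb(r,s,p) of J_r \u2297 J_s has exactly r nonzero parts; equivalently, the Jordan canonical form of J_r \u2297 J_s has exactly r Jordan blocks. -/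
open Matrix Kronecker

/-- The `k × k` upper-triangular Jordan block with eigenvalue `1`. -/
def jordanBlock (F : Type*) [Zero F] [One F] (k : ℕ) : Matrix (Fin k) (Fin k) F :=
  Matrix.of fun i j => if j = i then 1 else if (j : ℕ) = (i : ℕ) + 1 then 1 else 0

/-- `lam : Fin r → ℕ` is the Jordan partition of the square matrix `M`
(with eigenvalue 1), characterized by: `lam` is weakly decreasing with positive
parts, and for every `k` the rank of `(M - 1)^k` equals `∑ i, max (lam i - k) 0`.
Over a field this holds iff `M` is similar to the direct sum of the unipotent
Jordan blocks `J_{lam i}`. -/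
def IsJordanSeq {F : Type*} [CommRing F] {n : Type*} [Fintype n] [DecidableEq n]
    {r : ℕ} (M : Matrix n n F) (lam : Fin r → ℕ) : Prop :=
  Antitone lam ∧ (∀ i, 0 < lam i) ∧
    ∀ k : ℕ, ((M - 1) ^ k).rank = ∑ i, (lam i - k)

open Module LinearMap

section GeneralLinearAlgebra

variable {F V : Type*} [Field F] [AddCommGroup V] [Module F V] [FiniteDimensional F V]


-- downward closed finsets of ℕ are ranges
lemma range_of_dc (T : Finset ℕ) (hdc : ∀ m ∈ T, ∀ m' < m, m' ∈ T) :
    T = Finset.range T.card := by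
  have h1 : T ⊆ Finset.range T.card := by
    intro x hx
    rw [Finset.mem_range]
    by_contra hc
    push_neg at hc
    have : Finset.range (x+1) ⊆ T := by
      intro m hm
      rw [Finset.mem_range, Nat.lt_succ_iff] at hm
      rcases hm.lt_or_eq with h | h
      · exact hdc x hx m h
      · exact h ▸ hx
    have := Finset.card_le_card this
    simp at this
    omega
  refine Finset.eq_of_subset_of_card_le h1 (by simp)

lemma key1 (f : End F V) (m : ℕ) :
    finrank F (ker (f ^ (m+1))) =
      finrank F (ker (f ^ m)) + finrank F ((ker (f ^ (m+1))).map (f ^ m)) := by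
  have h := LinearMap.finrank_range_add_finrank_ker ((f ^ m).domRestrict (ker (f ^ (m+1))))
  rw [LinearMap.range_domRestrict, LinearMap.ker_domRestrict] at h
  have hle : ker (f ^ m) ≤ ker (f ^ (m+1)) := f.iterateKer.monotone (Nat.le_succ m)
  have h2 : finrank F (Submodule.comap (ker (f ^ (m+1))).subtype (ker (f ^ m)))
      = finrank F (ker (f ^ m)) := (Submodule.comapSubtypeEquivOfLe hle).finrank_eq
  rw [h2] at h
  omega

lemma key2 (f : End F V) : Antitone (fun m => finrank F ((ker (f ^ (m+1))).map (f ^ m))) := by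
  apply antitone_nat_of_succ_le
  intro m
  apply Submodule.finrank_mono
  rintro x ⟨y, hy, rfl⟩
  refine ⟨f y, ?_, ?_⟩
  · simp only [SetLike.mem_coe, LinearMap.mem_ker] at hy ⊢
    rw [← Module.End.mul_apply, ← pow_succ]
    exact hy
  · rw [← Module.End.mul_apply, ← pow_succ]

lemma exists_jordan_general (f : End F V) (K r : ℕ) (hK0 : 0 < K) (hK : f ^ K = 0)
    (hr : finrank F (ker f) = r) :
    ∃ lam : Fin r → ℕ, Antitone lam ∧ (∀ i, 0 < lam i) ∧
      ∀ k, finrank F (LinearMap.range (f ^ k)) = ∑ i, (lam i - k) := by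
  set D : ℕ → ℕ := fun m => finrank F ((ker (f ^ (m+1))).map (f ^ m)) with hD
  have hD0 : D 0 = r := by
    show finrank F ((ker (f ^ (0+1))).map (f ^ 0)) = r
    rw [pow_zero, zero_add, pow_one, Module.End.one_eq_id, Submodule.map_id]
    exact hr
  have hanti : Antitone D := key2 f
  have hDle : ∀ m, D m ≤ r := fun m => hD0 ▸ hanti (Nat.zero_le m)
  have hkersum : ∀ k, finrank F (ker (f ^ k)) = ∑ m ∈ Finset.range k, D m := by
    intro k
    induction k with
    | zero =>
        rw [pow_zero, Module.End.one_eq_id, LinearMap.ker_id]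
        simp [finrank_bot]
    | succ n ih => rw [key1 f n, ih, Finset.sum_range_succ]
  have htot : ∑ m ∈ Finset.range K, D m = finrank F V := by
    rw [← hkersum, hK, LinearMap.ker_zero, finrank_top]
  set lam : Fin r → ℕ :=
    fun i => ((Finset.range K).filter (fun m => (i : ℕ) < D m)).card with hlam
  have hS : ∀ i : Fin r, (Finset.range K).filter (fun m => (i : ℕ) < D m)
      = Finset.range (lam i) := by
    intro i
    apply range_of_dc
    intro m hm m' hm'
    rw [Finset.mem_filter, Finset.mem_range] at hm ⊢
    exact ⟨hm'.trans hm.1, lt_of_lt_of_le hm.2 (hanti hm'.le)⟩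
  have hlamK : ∀ i, lam i ≤ K := by
    intro i
    calc lam i ≤ (Finset.range K).card := Finset.card_filter_le _ _
    _ = K := Finset.card_range K
  refine ⟨lam, ?_, ?_, ?_⟩
  · intro i j hij
    apply Finset.card_le_card
    intro m hm
    rw [Finset.mem_filter] at hm ⊢
    exact ⟨hm.1, lt_of_le_of_lt (Fin.le_def.mp hij) hm.2⟩
  · intro i
    rw [hlam, Finset.card_pos]
    exact ⟨0, Finset.mem_filter.mpr ⟨Finset.mem_range.mpr hK0, hD0 ▸ i.isLt⟩⟩
  · intro k
    rcases le_or_gt K k with hk | hk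
    · obtain ⟨c, rfl⟩ := Nat.exists_eq_add_of_le hk
      rw [pow_add, hK, zero_mul, LinearMap.range_zero, finrank_bot]
      symm
      apply Finset.sum_eq_zero
      intro i _
      have := hlamK i
      omega
    · have hrn := LinearMap.finrank_range_add_finrank_ker (f ^ k)
      have h1 : ∀ i : Fin r, lam i - k = ((Finset.Ico k K).filter
          (fun m => (i : ℕ) < D m)).card := by
        intro i
        have he : (Finset.Ico k K).filter (fun m => (i : ℕ) < D m)
            = Finset.Ico k (lam i) := by
          ext m
          simp only [Finset.mem_filter, Finset.mem_Ico]
          have hm : m ∈ (Finset.range K).filter (fun m => (i : ℕ) < D m)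
              ↔ m ∈ Finset.range (lam i) := by rw [hS i]
          simp only [Finset.mem_filter, Finset.mem_range] at hm
          constructor
          · rintro ⟨⟨h2, h3⟩, h4⟩
            exact ⟨h2, hm.mp ⟨h3, h4⟩⟩
          · rintro ⟨h2, h3⟩
            obtain ⟨h4, h5⟩ := hm.mpr h3
            exact ⟨⟨h2, h4⟩, h5⟩
        rw [he, Nat.card_Ico]
      have h2 : ∑ i : Fin r, (lam i - k) = ∑ m ∈ Finset.Ico k K, D m := by
        simp only [h1, Finset.card_filter]
        rw [Finset.sum_comm]
        apply Finset.sum_congr rfl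
        intro m _
        rw [Fin.sum_univ_eq_sum_range (fun i => if i < D m then 1 else 0) r,
            ← Finset.card_filter]
        have he : (Finset.range r).filter (fun i => i < D m) = Finset.range (D m) := by
          ext x
          simp only [Finset.mem_filter, Finset.mem_range]
          have := hDle m
          omega
        rw [he, Finset.card_range]
      have h3 : ∑ m ∈ Finset.range k, D m + ∑ m ∈ Finset.Ico k K, D m
          = ∑ m ∈ Finset.range K, D m := by
        simp only [Finset.range_eq_Ico]
        exact Finset.sum_Ico_consecutive D (Nat.zero_le k) hk.le
      have h4 := hkersum k
      omega


end GeneralLinearAlgebra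

section MatrixPart

variable {F : Type*} [Field F] {r s : ℕ}

lemma Nentry (x z : Fin r × Fin s)
    (h : (z.1 : ℕ) + z.2 ≤ (x.1 : ℕ) + x.2) :
    (jordanBlock F r ⊗ₖ jordanBlock F s - 1) x z = 0 := by
  obtain ⟨x1, x2⟩ := x
  obtain ⟨z1, z2⟩ := z
  simp only [Matrix.sub_apply, Matrix.kroneckerMap_apply, Matrix.one_apply, jordanBlock,
    Matrix.of_apply, Prod.mk.injEq, Fin.ext_iff] at *
  split_ifs <;> first | (exfalso; omega) | norm_num

lemma Nnil_aux : ∀ (k : ℕ) (x y : Fin r × Fin s),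
    (y.1 : ℕ) + y.2 < (x.1 : ℕ) + x.2 + k →
    ((jordanBlock F r ⊗ₖ jordanBlock F s - 1) ^ k) x y = 0 := by
  intro k
  induction k with
  | zero =>
    intro x y h
    rw [pow_zero, Matrix.one_apply]
    rw [if_neg]
    rintro rfl
    omega
  | succ n ih =>
    intro x y h
    rw [pow_succ', Matrix.mul_apply]
    apply Finset.sum_eq_zero
    intro z _
    rcases le_or_gt ((z.1 : ℕ) + z.2) ((x.1 : ℕ) + x.2) with hz | hz
    · rw [Nentry x z hz, zero_mul]
    · rw [ih z y (by omega), mul_zero]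

lemma Nnil : (jordanBlock F r ⊗ₖ jordanBlock F s - 1) ^ (r + s) = 0 := by
  ext x y
  rw [Matrix.zero_apply]
  apply Nnil_aux
  have := x.1.isLt
  have := x.2.isLt
  have := y.1.isLt
  have := y.2.isLt
  omega

lemma mulVecLin_pow' (k : ℕ) (M : Matrix (Fin r × Fin s) (Fin r × Fin s) F) :
    (M ^ k).mulVecLin = M.mulVecLin ^ k := by
  induction k with
  | zero => rw [pow_zero, pow_zero, Matrix.mulVecLin_one, Module.End.one_eq_id]
  | succ n ih => rw [pow_succ, pow_succ, Matrix.mulVecLin_mul, ih, Module.End.mul_eq_comp]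

lemma rank_pow_eq (k : ℕ) (M : Matrix (Fin r × Fin s) (Fin r × Fin s) F) :
    (M ^ k).rank = finrank F (LinearMap.range (M.mulVecLin ^ k)) := by
  rw [Matrix.rank, mulVecLin_pow']

lemma jrow {k : ℕ} (w : Fin k → F) (i : Fin k) :
    ∑ j, jordanBlock F k i j * w j
      = w i + (if h : (i : ℕ) + 1 < k then w ⟨(i : ℕ) + 1, h⟩ else 0) := by
  have hsplit : ∀ j : Fin k, jordanBlock F k i j * w j
      = (if j = i then w j else 0) + (if (j : ℕ) = (i : ℕ) + 1 then w j else 0) := by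
    intro j
    simp only [jordanBlock, Matrix.of_apply]
    split_ifs with h1 h2
    · exfalso; rw [h1] at h2; omega
    · rw [one_mul, add_zero]
    · rw [one_mul, zero_add]
    · rw [zero_mul, add_zero]
  rw [Finset.sum_congr rfl (fun j _ => hsplit j), Finset.sum_add_distrib]
  congr 1
  · rw [Finset.sum_ite_eq' Finset.univ i w, if_pos (Finset.mem_univ i)]
  · by_cases h : (i : ℕ) + 1 < k
    · rw [dif_pos h]
      have step : ∀ j : Fin k, (if (j : ℕ) = (i : ℕ) + 1 then w j else 0)
          = (if j = (⟨(i : ℕ) + 1, h⟩ : Fin k) then w j else 0) := by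
        intro j
        by_cases hj : (j : ℕ) = (i : ℕ) + 1
        · rw [if_pos hj, if_pos (Fin.ext hj)]
        · rw [if_neg hj, if_neg (fun hc => hj (by rw [hc]))]
      rw [Finset.sum_congr rfl (fun j _ => step j),
        Finset.sum_ite_eq' Finset.univ _ w, if_pos (Finset.mem_univ _)]
    · rw [dif_neg h]
      apply Finset.sum_eq_zero
      intro j _
      rw [if_neg]
      have := j.isLt
      omega

lemma mvN (v : Fin r × Fin s → F) (i : Fin r) (j : Fin s) :
    ((jordanBlock F r ⊗ₖ jordanBlock F s - 1) *ᵥ v) (i, j)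
      = (if h : (j : ℕ) + 1 < s then v (i, ⟨(j : ℕ) + 1, h⟩) else 0)
        + (if h : (i : ℕ) + 1 < r then
            (v (⟨(i : ℕ) + 1, h⟩, j) + (if h2 : (j : ℕ) + 1 < s then
              v (⟨(i : ℕ) + 1, h⟩, ⟨(j : ℕ) + 1, h2⟩) else 0)) else 0) := by
  have expand : ((jordanBlock F r ⊗ₖ jordanBlock F s - 1) *ᵥ v) (i, j)
      = (∑ p : Fin r × Fin s,
          jordanBlock F r i p.1 * jordanBlock F s j p.2 * v p)
        - ∑ p : Fin r × Fin s, (if (i, j) = p then 1 else 0) * v p := by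
    simp only [Matrix.mulVec, dotProduct, Matrix.sub_apply,
      Matrix.kroneckerMap_apply, Matrix.one_apply, sub_mul, Finset.sum_sub_distrib]
  rw [expand]
  have h2nd : ∑ p : Fin r × Fin s, (if (i, j) = p then 1 else 0) * v p = v (i, j) := by
    rw [Finset.sum_congr rfl (fun p _ => by
      rw [ite_mul, one_mul, zero_mul] : ∀ p ∈ Finset.univ, (if (i,j) = p then (1:F) else 0) * v p = if (i,j) = p then v p else 0)]
    rw [Finset.sum_ite_eq Finset.univ (i, j) v, if_pos (Finset.mem_univ _)]
  rw [h2nd]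
  have h1st : (∑ p : Fin r × Fin s,
      jordanBlock F r i p.1 * jordanBlock F s j p.2 * v p)
      = ∑ a : Fin r, jordanBlock F r i a *
          ∑ b : Fin s, jordanBlock F s j b * v (a, b) := by
    rw [Fintype.sum_prod_type]
    apply Finset.sum_congr rfl
    intro a _
    rw [Finset.mul_sum]
    apply Finset.sum_congr rfl
    intro b _
    ring
  rw [h1st]
  have hinner : ∀ a : Fin r, (∑ b : Fin s, jordanBlock F s j b * v (a, b))
      = v (a, j) + (if h : (j : ℕ) + 1 < s then v (a, ⟨(j : ℕ) + 1, h⟩) else 0) :=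
    fun a => jrow (fun b => v (a, b)) j
  rw [Finset.sum_congr rfl (fun a _ => by rw [hinner a]),
    jrow (fun a => v (a, j) + (if h : (j : ℕ) + 1 < s then v (a, ⟨(j : ℕ) + 1, h⟩) else 0)) i]
  by_cases hi : (i : ℕ) + 1 < r <;> by_cases hj : (j : ℕ) + 1 < s <;>
    simp only [dif_pos, dif_neg, hi, hj, dite_true, dite_false] <;> ring

def gg {F : Type*} [Field F] (c : ℕ → F) : ℕ → ℕ → F
  | 0, j => if j = 0 then c 0 else 0
  | (a+1), 0 => c (a+1)
  | (a+1), (j+1) => -(gg c a j + gg c a (j+1))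

lemma gg_zero (c : ℕ → F) (a : ℕ) : gg c a 0 = c a := by
  cases a <;> simp [gg]

lemma gg_big (c : ℕ → F) : ∀ a j, a < j → gg c a j = 0 := by
  intro a
  induction a with
  | zero =>
    intro j hj
    cases j with
    | zero => omega
    | succ j' => simp [gg]
  | succ n ih =>
    intro j hj
    cases j with
    | zero => omega
    | succ j' =>
      show -(gg c n j' + gg c n (j' + 1)) = 0
      rw [ih j' (by omega), ih (j' + 1) (by omega), add_zero, neg_zero]

lemma finrank_ker_N (hr : 1 ≤ r) (hrs : r ≤ s) :
    finrank F (ker (Matrix.mulVecLin (jordanBlock F r ⊗ₖ jordanBlock F s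
      - (1 : Matrix (Fin r × Fin s) (Fin r × Fin s) F)))) = r := by
  have hs : 0 < s := lt_of_lt_of_le hr hrs
  set N := jordanBlock F r ⊗ₖ jordanBlock F s
    - (1 : Matrix (Fin r × Fin s) (Fin r × Fin s) F) with hN
  have hker : ∀ v : Fin r × Fin s → F, v ∈ ker N.mulVecLin ↔
      ∀ (i : Fin r) (j : Fin s),
        (if h : (j : ℕ) + 1 < s then v (i, ⟨(j : ℕ) + 1, h⟩) else 0)
        + (if h : (i : ℕ) + 1 < r then
            (v (⟨(i : ℕ) + 1, h⟩, j) + (if h2 : (j : ℕ) + 1 < s then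
              v (⟨(i : ℕ) + 1, h⟩, ⟨(j : ℕ) + 1, h2⟩) else 0)) else 0) = 0 := by
    intro v
    rw [LinearMap.mem_ker, Matrix.mulVecLin_apply]
    constructor
    · intro hv i j
      rw [← mvN v i j, hv]
      rfl
    · intro hv
      funext p
      obtain ⟨i, j⟩ := p
      rw [mvN]
      exact hv i j
  have inj0 : ∀ v ∈ ker N.mulVecLin, (∀ i : Fin r, v (i, ⟨0, hs⟩) = 0) → v = 0 := by
    intro v hv h0
    rw [hker] at hv
    have claim : ∀ (a : ℕ) (i : Fin r) (j : Fin s), r ≤ (i : ℕ) + a + 1 → v (i, j) = 0 := by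
      intro a
      induction a with
      | zero =>
        intro i j hi
        obtain ⟨jv, hjv⟩ := j
        cases jv with
        | zero => exact h0 i
        | succ j' =>
          have he := hv i ⟨j', by omega⟩
          rw [dif_pos (show (j' : ℕ) + 1 < s from hjv), dif_neg (by omega : ¬((i : ℕ) + 1 < r)),
            add_zero] at he
          exact he
      | succ n ih =>
        intro i j hi
        obtain ⟨jv, hjv⟩ := j
        cases jv with
        | zero => exact h0 i
        | succ j' =>
          have he := hv i ⟨j', by omega⟩
          rw [dif_pos (show (j' : ℕ) + 1 < s from hjv)] at he
          by_cases hi2 : (i : ℕ) + 1 < r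
          · rw [dif_pos hi2, dif_pos (show (j' : ℕ) + 1 < s from hjv),
              ih ⟨(i : ℕ) + 1, hi2⟩ ⟨j', by omega⟩ (by simp; omega),
              ih ⟨(i : ℕ) + 1, hi2⟩ ⟨j' + 1, hjv⟩ (by simp; omega),
              add_zero, add_zero] at he
            exact he
          · rw [dif_neg hi2, add_zero] at he
            exact he
    funext p
    exact claim r p.1 p.2 (by omega)
  have surj0 : ∀ c' : Fin r → F, ∃ v ∈ ker N.mulVecLin,
      ∀ i : Fin r, v (i, ⟨0, hs⟩) = c' i := by
    intro c'
    set c : ℕ → F := fun a => c' ⟨r - 1 - a, by omega⟩ with hc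
    refine ⟨fun p => gg c (r - 1 - (p.1 : ℕ)) (p.2 : ℕ), ?_, ?_⟩
    · rw [hker]
      intro i j
      by_cases hi : (i : ℕ) + 1 < r
      · have ha : r - 1 - (i : ℕ) = (r - 1 - ((i : ℕ) + 1)) + 1 := by omega
        by_cases hj : (j : ℕ) + 1 < s
        · rw [dif_pos hj, dif_pos hi, dif_pos hj]
          show gg c (r - 1 - (i : ℕ)) ((j : ℕ) + 1)
            + (gg c (r - 1 - ((i : ℕ) + 1)) (j : ℕ)
              + gg c (r - 1 - ((i : ℕ) + 1)) ((j : ℕ) + 1)) = 0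
          rw [ha]
          show -(gg c (r - 1 - ((i : ℕ) + 1)) (j : ℕ)
              + gg c (r - 1 - ((i : ℕ) + 1)) ((j : ℕ) + 1))
            + (gg c (r - 1 - ((i : ℕ) + 1)) (j : ℕ)
              + gg c (r - 1 - ((i : ℕ) + 1)) ((j : ℕ) + 1)) = 0
          ring
        · rw [dif_neg hj, dif_pos hi, dif_neg hj]
          show 0 + (gg c (r - 1 - ((i : ℕ) + 1)) (j : ℕ) + 0) = 0
          have hjs := j.isLt
          rw [gg_big c _ _ (by omega)]
          ring
      · rw [dif_neg hi, add_zero]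
        by_cases hj : (j : ℕ) + 1 < s
        · rw [dif_pos hj]
          show gg c (r - 1 - (i : ℕ)) ((j : ℕ) + 1) = 0
          have hi0 : r - 1 - (i : ℕ) = 0 := by omega
          rw [hi0]
          simp [gg]
        · rw [dif_neg hj]
    · intro i
      show gg c (r - 1 - (i : ℕ)) 0 = c' i
      rw [gg_zero, hc]
      have := i.isLt
      exact congrArg c' (Fin.ext (by simp; omega))
  let π : ker N.mulVecLin →ₗ[F] (Fin r → F) :=
    { toFun := fun v i => (v : Fin r × Fin s → F) (i, ⟨0, hs⟩)
      map_add' := fun a b => rfl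
      map_smul' := fun m a => rfl }
  have hbij : Function.Bijective π := by
    constructor
    · intro a b hab
      apply Subtype.ext
      have hmem : ((a : Fin r × Fin s → F) - (b : Fin r × Fin s → F)) ∈ ker N.mulVecLin :=
        sub_mem a.2 b.2
      have h0 : ∀ i : Fin r, ((a : Fin r × Fin s → F) - (b : Fin r × Fin s → F)) (i, ⟨0, hs⟩) = 0 := by
        intro i
        have hthis := congrFun hab i
        simp only [Pi.sub_apply]
        rw [sub_eq_zero]
        exact hthis
      have := inj0 _ hmem h0
      rwa [sub_eq_zero] at this
    · intro c'
      obtain ⟨v, hv, hv0⟩ := surj0 c'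
      exact ⟨⟨v, hv⟩, funext hv0⟩
  calc finrank F (ker N.mulVecLin)
      = finrank F (Fin r → F) := LinearEquiv.finrank_eq (LinearEquiv.ofBijective π hbij)
    _ = r := by simp [Module.finrank_pi]


end MatrixPart

/-- Over any field, the Jordan canonical form of `J_r ⊗ J_s` (for `1 ≤ r ≤ s`)
has exactly `r` Jordan blocks: there is a Jordan partition with exactly `r`
(necessarily positive) parts. -/
theorem stmt6 (F : Type*) [Field F] (r s : ℕ) (hr : 1 ≤ r) (hrs : r ≤ s) :
    ∃ lam : Fin r → ℕ, IsJordanSeq (jordanBlock F r ⊗ₖ jordanBlock F s) lam := by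
  have hK : (jordanBlock F r ⊗ₖ jordanBlock F s - 1).mulVecLin ^ (r + s) = 0 := by
    rw [← mulVecLin_pow', Nnil, Matrix.mulVecLin_zero]
  obtain ⟨lam, h1, h2, h3⟩ := exists_jordan_general
    ((jordanBlock F r ⊗ₖ jordanBlock F s - 1).mulVecLin) (r + s) r (by omega) hK
    (finrank_ker_N hr hrs)
  exact ⟨lam, h1, h2, fun k => (rank_pow_eq k _).trans (h3 k)⟩
end

section
/- Suppose F has characteristic p > 0 and 1 \u2264 r \u2264 s. Let k \u2265 1 be minimal such that p does not divide the binomial coefficient C(r+s-1-k, r-1). Then the largest part of the Jordan partition \u03bb(r,s,p) is \u03bb_1 = r+s-k, and this part occurs with multiplicity exactly k in \u03bb(r,s,p). -/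
open Matrix Kronecker

section NT

variable {p : ℕ}

lemma aux_cast_ne_zero_iff (hp : p.Prime) (a : ℕ) : ((a : ℕ) : ZMod p) ≠ 0 ↔ ¬ p ∣ a := by
  rw [Ne, ZMod.natCast_eq_zero_iff]

lemma aux_not_dvd_choose_of_lt_p (hp : p.Prime) {a b : ℕ} (hap : a < p) (hba : b ≤ a) :
    ¬ p ∣ a.choose b := by
  intro h
  have h1 : a.choose b * (b.factorial * (a - b).factorial) = a.factorial := by
    rw [← Nat.choose_mul_factorial_mul_factorial hba]; ring
  have h2 : p ∣ a.factorial := h1 ▸ Dvd.dvd.mul_right h _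
  have := (Nat.Prime.dvd_factorial hp).mp h2
  omega

lemma aux_lucas (hp : p.Prime) (n a : ℕ) :
    (n.choose a : ZMod p) = ((n % p).choose (a % p) : ℕ) * ((n / p).choose (a / p) : ℕ) := by
  haveI : Fact p.Prime := ⟨hp⟩
  have h := Choose.choose_modEq_choose_mod_mul_choose_div_nat (p := p) (n := n) (k := a)
  have := (ZMod.natCast_eq_natCast_iff _ _ _).mpr h
  push_cast at this ⊢
  exact this

lemma aux_lucas_pow (hp : p.Prime) (d n a : ℕ) :
    (n.choose a : ZMod p) =
      ((n % p ^ d).choose (a % p ^ d) : ℕ) * ((n / p ^ d).choose (a / p ^ d) : ℕ) := by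
  induction d generalizing n a with
  | zero => simp [Nat.mod_one]
  | succ d ih =>
    have hd : p ∣ p ^ (d + 1) := dvd_pow_self p (Nat.succ_ne_zero d)
    have e1 : n % p ^ (d+1) % p = n % p := Nat.mod_mod_of_dvd n hd
    have e2 : a % p ^ (d+1) % p = a % p := Nat.mod_mod_of_dvd a hd
    have e3 : n % p ^ (d+1) / p = n / p % p ^ d := by
      rw [show p ^ (d+1) = p * p ^ d by ring]; exact Nat.mod_mul_right_div_self n p (p ^ d)
    have e4 : a % p ^ (d+1) / p = a / p % p ^ d := by
      rw [show p ^ (d+1) = p * p ^ d by ring]; exact Nat.mod_mul_right_div_self a p (p ^ d)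
    have e5 : n / p ^ (d+1) = n / p / p ^ d := by
      rw [Nat.div_div_eq_div_mul, pow_succ, mul_comm (p^d) p]
    have e6 : a / p ^ (d+1) = a / p / p ^ d := by
      rw [Nat.div_div_eq_div_mul, pow_succ, mul_comm (p^d) p]
    rw [aux_lucas hp n a, ih (n / p) (a / p),
      aux_lucas hp (n % p ^ (d+1)) (a % p ^ (d+1)), e1, e2, e3, e4, e5, e6]
    ring

lemma aux_choose_p_sub_one (hp : p.Prime) {x : ℕ} (hx : x ≤ p - 1) :
    (((p - 1).choose x : ℕ) : ZMod p) = (-1) ^ x := by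
  induction x with
  | zero => simp
  | succ x ih =>
    have hp2 := hp.two_le
    have pas := Nat.choose_succ_succ (p - 1) x
    rw [show (p - 1).succ = p from by omega] at pas
    have hdvd : p ∣ p.choose (x + 1) :=
      Nat.Prime.dvd_choose_self hp (Nat.succ_ne_zero x) (by omega)
    have h0 : ((p.choose (x + 1) : ℕ) : ZMod p) = 0 :=
      (ZMod.natCast_eq_zero_iff _ _).mpr hdvd
    rw [pas] at h0
    push_cast at h0
    have := ih (by omega)
    rw [this] at h0
    rw [pow_succ]
    linear_combination h0

lemma aux_choose_ppow_sub_one (hp : p.Prime) (d : ℕ) {x : ℕ} (hx : x ≤ p ^ d - 1) :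
    (((p ^ d - 1).choose x : ℕ) : ZMod p) = (-1) ^ x := by
  haveI : Fact p.Prime := ⟨hp⟩
  induction d generalizing x with
  | zero =>
    simp only [pow_zero] at hx
    interval_cases x
    simp
  | succ d ih =>
    have hp2 := hp.two_le
    have hpd : 1 ≤ p ^ d := Nat.one_le_pow _ _ (by omega)
    have h1 : p ^ (d + 1) - 1 = p * (p ^ d - 1) + (p - 1) := by
      have h2 : p * (p ^ d - 1) + p = p * p ^ d := by
        rw [← Nat.mul_succ]; congr 1; omega
      have h3 : p ^ (d+1) = p * p ^ d := by ring
      omega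
    have hmod : (p ^ (d + 1) - 1) % p = p - 1 := by
      rw [h1, Nat.mul_add_mod]
      exact Nat.mod_eq_of_lt (by omega)
    have hdiv : (p ^ (d + 1) - 1) / p = p ^ d - 1 := by
      rw [h1, Nat.mul_add_div (by omega : 0 < p), Nat.div_eq_of_lt (by omega), add_zero]
    have hxp : x % p ≤ p - 1 := by
      have := Nat.mod_lt x (show 0 < p by omega); omega
    have hxd : x / p ≤ p ^ d - 1 := by
      have := Nat.div_le_div_right (c := p) hx
      rwa [hdiv] at this
    have key : ((-1 : ZMod p)) ^ x = (-1) ^ (x % p) * (-1) ^ (x / p) := by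
      conv_lhs => rw [← Nat.mod_add_div x p]
      rw [pow_add, pow_mul, neg_one_pow_char (ZMod p) p]
    rw [aux_lucas hp, hmod, hdiv, aux_choose_p_sub_one hp hxp, ih hxd, key]

lemma aux_step_not_dvd (hp : p.Prime) {N y : ℕ} (hN0 : ¬ p ∣ N) (h : ¬ p ∣ (N - 1).choose y) :
    ¬ p ∣ N.choose y := by
  haveI : Fact p.Prime := ⟨hp⟩
  have hp2 := hp.two_le
  have hdm : p * (N / p) + N % p = N := Nat.div_add_mod N p
  have ht1 : 1 ≤ N % p := by
    rcases Nat.eq_zero_or_pos (N % p) with h0 | h0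
    · exact absurd (Nat.dvd_of_mod_eq_zero h0) hN0
    · exact h0
  have htp : N % p < p := Nat.mod_lt _ (by omega)
  have e0 : N - 1 = p * (N / p) + (N % p - 1) := by omega
  have emod : (N - 1) % p = N % p - 1 := by
    rw [e0, Nat.mul_add_mod]; exact Nat.mod_eq_of_lt (by omega)
  have ediv : (N - 1) / p = N / p := by
    rw [e0, Nat.mul_add_div (by omega : 0 < p), Nat.div_eq_of_lt (show N % p - 1 < p by omega), add_zero]
  rw [← aux_cast_ne_zero_iff hp] at h ⊢
  rw [aux_lucas hp, emod, ediv] at h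
  have hf1 : (((N % p - 1).choose (y % p) : ℕ) : ZMod p) ≠ 0 := left_ne_zero_of_mul h
  have hf2 : (((N / p).choose (y / p) : ℕ) : ZMod p) ≠ 0 := right_ne_zero_of_mul h
  have hyp : y % p ≤ N % p - 1 := by
    by_contra hc
    rw [Nat.choose_eq_zero_of_lt (by omega)] at hf1
    simp at hf1
  rw [aux_lucas hp]
  refine mul_ne_zero ?_ hf2
  rw [aux_cast_ne_zero_iff hp]
  exact aux_not_dvd_choose_of_lt_p hp htp (by omega)

end NT

lemma aux_main_nt (hp : p.Prime) (r s k : ℕ) (hr : 1 ≤ r) (hrs : r ≤ s) (hk1 : 1 ≤ k)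
    (hks : k ≤ s)
    (hknd : ¬ p ∣ (r + s - 1 - k).choose (r - 1))
    (hmin : ∀ t, 1 ≤ t → t < k → p ∣ (r + s - 1 - k + t).choose (r - 1)) :
    k ≤ r ∧
    (∀ a, r - k + 1 ≤ a → a ≤ r - 1 → p ∣ (r + s - k).choose a) ∧
    ¬ p ∣ (r + s - 1 - k).choose (r - k) ∧
    (∀ c, c < k → (((r + s - 1 - k).choose (r - k + c) : ℕ) : ZMod p)
        = (-1) ^ c * (((r + s - 1 - k).choose (r - k) : ℕ) : ZMod p)) := by
  haveI : Fact p.Prime := ⟨hp⟩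
  have hp2 := hp.two_le
  set n₀ := r + s - 1 - k with hn₀
  set u := r - 1 with hu
  set d := (n₀ + 1).factorization p with hd
  set P := p ^ d with hP
  set Q := (n₀ + 1) / P with hQdef
  have hPQ : P * Q = n₀ + 1 := Nat.ordProj_mul_ordCompl_eq_self (n₀ + 1) p
  have hQnd : ¬ p ∣ Q := Nat.not_dvd_ordCompl hp (Nat.succ_ne_zero n₀)
  have hP1 : 1 ≤ P := Nat.one_le_pow _ _ (by omega)
  have hQ1 : 1 ≤ Q := by
    rcases Nat.eq_zero_or_pos Q with h0 | h0
    · rw [h0, mul_zero] at hPQ; omega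
    · exact h0
  set u₀ := u % P with hu₀
  have hu₀P : u₀ < P := Nat.mod_lt _ (by omega)
  have hPu : P * (u / P) + u₀ = u := Nat.div_add_mod u P
  have hu₀u : u₀ ≤ u := Nat.mod_le _ _
  have hmulQ : P * (Q - 1) + P = P * Q := by rw [← Nat.mul_succ]; congr 1; omega
  have he : n₀ = P * (Q - 1) + (P - 1) := by omega
  have hnmod : n₀ % P = P - 1 := by
    rw [he, Nat.mul_add_mod]; exact Nat.mod_eq_of_lt (by omega)
  have hndiv : n₀ / P = Q - 1 := by
    rw [he, Nat.mul_add_div (by omega : 0 < P),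
      Nat.div_eq_of_lt (show P - 1 < P by omega), add_zero]
  -- the invariant quotient factor
  have hXnd : ¬ p ∣ (Q - 1).choose (u / P) := by
    intro hdvd
    apply hknd
    rw [← aux_cast_ne_zero_iff hp, aux_lucas_pow hp d, hnmod, hndiv, ← hu₀] at hknd
    exact absurd ((ZMod.natCast_eq_zero_iff _ _).mpr hdvd)
      (right_ne_zero_of_mul hknd)
  have hXne : (((Q - 1).choose (u / P) : ℕ) : ZMod p) ≠ 0 :=
    (aux_cast_ne_zero_iff hp _).mpr hXnd
  have hQstep : ¬ p ∣ Q.choose (u / P) := by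
    refine aux_step_not_dvd hp hQnd ?_
    exact hXnd
  -- k ≤ u₀ + 1
  have hklek : k ≤ u₀ + 1 := by
    by_contra hcon
    push_neg at hcon
    have hA := hmin (u₀ + 1) (by omega) (by omega)
    have heA : n₀ + (u₀ + 1) = P * Q + u₀ := by omega
    have hAmod : (n₀ + (u₀ + 1)) % P = u₀ := by
      rw [heA, Nat.mul_add_mod]; exact Nat.mod_eq_of_lt hu₀P
    have hAdiv : (n₀ + (u₀ + 1)) / P = Q := by
      rw [heA, Nat.mul_add_div (by omega : 0 < P), Nat.div_eq_of_lt hu₀P, add_zero]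
    have := (ZMod.natCast_eq_zero_iff _ p).mpr hA
    rw [aux_lucas_pow hp d, hAmod, hAdiv, ← hu₀, Nat.choose_self] at this
    rw [Nat.cast_one, one_mul] at this
    exact (aux_cast_ne_zero_iff hp _).mpr hQstep this
  have hkr : k ≤ r := by omega
  refine ⟨hkr, ?_, ?_⟩
  · -- divisibility of C(n₀+1, a)
    intro a ha1 ha2
    have hrsk : r + s - k = n₀ + 1 := by omega
    rw [hrsk]
    by_contra hcon
    rw [← aux_cast_ne_zero_iff hp, aux_lucas_pow hp d] at hcon
    have hmod0 : (n₀ + 1) % P = 0 := by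
      obtain ⟨c, hc⟩ : P ∣ n₀ + 1 := ⟨Q, hPQ.symm⟩
      rw [hc, Nat.mul_mod_right]
    rw [hmod0] at hcon
    have haP : a % P = 0 := by
      by_contra h0
      have h0' : (0:ℕ) < a % P := by omega
      rw [hP] at h0'
      rw [Nat.choose_eq_zero_of_lt h0'] at hcon
      simp at hcon
    have hPa : P ∣ a := Nat.dvd_of_mod_eq_zero haP
    have h1 : a / P ≤ u / P := Nat.div_le_div_right (by omega)
    have h2 : P * (a / P) = a := Nat.mul_div_cancel' hPa
    have h3 : P * (a / P) ≤ P * (u / P) := Nat.mul_le_mul_left P h1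
    omega
  · -- the (-1)^c structure
    have key : ∀ c, c ≤ k - 1 →
        (((n₀).choose (r - k + c) : ℕ) : ZMod p)
          = (-1) ^ (u₀ - (k - 1) + c) * (((Q - 1).choose (u / P) : ℕ) : ZMod p) := by
      intro c hc
      have hw : r - k + c = P * (u / P) + (u₀ - (k - 1) + c) := by omega
      have hwlt : u₀ - (k - 1) + c < P := by omega
      have hmod : (r - k + c) % P = u₀ - (k - 1) + c := by
        rw [hw, Nat.mul_add_mod]; exact Nat.mod_eq_of_lt hwlt
      have hdiv : (r - k + c) / P = u / P := by
        rw [hw, Nat.mul_add_div (by omega : 0 < P), Nat.div_eq_of_lt hwlt, add_zero]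
      rw [aux_lucas_pow hp d, hnmod, hndiv, hmod, hdiv,
        aux_choose_ppow_sub_one hp d (by omega)]
    have hne1 : ((-1 : ZMod p)) ^ (u₀ - (k - 1)) ≠ 0 :=
      pow_ne_zero _ (neg_ne_zero.mpr one_ne_zero)
    constructor
    · rw [← aux_cast_ne_zero_iff hp]
      have := key 0 (by omega)
      rw [add_zero] at this
      rw [this, add_zero]
      exact mul_ne_zero hne1 hXne
    · intro c hck
      have h1 := key c (by omega)
      have h2 := key 0 (by omega)
      rw [add_zero] at h2
      rw [h1, h2, add_zero, pow_add]
      ring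

section MX

variable {F : Type*} [Field F]

/-- the nilpotent part -/
def Nb (F : Type*) [Field F] (s : ℕ) : Matrix (Fin s) (Fin s) F := jordanBlock F s - 1

lemma jordan_eq_one_add (s : ℕ) : jordanBlock F s = 1 + Nb F s := by
  rw [Nb]; abel

lemma Nb_apply {s : ℕ} (i j : Fin s) :
    Nb F s i j = if (j : ℕ) = (i : ℕ) + 1 then 1 else 0 := by
  rcases eq_or_ne j i with h | h
  · subst h
    have : ¬ ((j:ℕ) = (j:ℕ) + 1) := by omega
    simp [Nb, jordanBlock, Matrix.sub_apply, Matrix.one_apply, this]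
  · have h' : i ≠ j := Ne.symm h
    simp [Nb, jordanBlock, Matrix.sub_apply, Matrix.one_apply, h, h']

lemma sum_ite_coe {s : ℕ} (c : ℕ) (g : Fin s → F) :
    (∑ t : Fin s, if (t : ℕ) = c then g t else 0) = if h : c < s then g ⟨c, h⟩ else 0 := by
  split_ifs with h
  · rw [Finset.sum_eq_single (⟨c, h⟩ : Fin s)]
    · simp
    · intro t _ ht
      rw [if_neg]
      intro hc
      exact ht (by ext; simpa using hc)
    · intro ht; exact absurd (Finset.mem_univ _) ht
  · apply Finset.sum_eq_zero
    intro t _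
    rw [if_neg]
    have := t.isLt
    omega

lemma Nb_pow_apply {s : ℕ} (a : ℕ) (i j : Fin s) :
    (Nb F s ^ a) i j = if (j : ℕ) = (i : ℕ) + a then 1 else 0 := by
  induction a generalizing j with
  | zero =>
    rw [pow_zero, Matrix.one_apply]
    have h0 : ((j : ℕ) = (i : ℕ) + 0) ↔ i = j := by rw [Fin.ext_iff]; omega
    split_ifs with h1 h2 h2 <;> first | rfl | (exact absurd (h0.mpr h1) h2) | (exact absurd (h0.mp h2) h1)
  | succ a ih =>
    rw [pow_succ, Matrix.mul_apply]
    have step : ∀ t : Fin s, (Nb F s ^ a) i t * Nb F s t j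
        = if (t : ℕ) = (i : ℕ) + a then (if (j:ℕ) = (i:ℕ) + a + 1 then (1:F) else 0) else 0 := by
      intro t
      rw [ih, Nb_apply]
      split_ifs with h1 h2 h3 h3 <;> simp_all <;> omega
    simp_rw [step]
    rw [sum_ite_coe]
    have hj := j.isLt
    split_ifs with h1 h2 h2 <;> first | rfl | omega

end MX

section MX2

variable {F : Type*} [Field F]

lemma Nb_pow_zero {s a : ℕ} (h : s ≤ a) : (Nb F s) ^ a = 0 := by
  ext i j
  rw [Nb_pow_apply, Matrix.zero_apply, if_neg]
  have := j.isLt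
  omega

/-- the change-of-basis matrix conjugating `N (1+N)⁻¹` to `N` -/
def Tm (F : Type*) [Field F] (s : ℕ) : Matrix (Fin s) (Fin s) F :=
  Matrix.of fun i j => if (i : ℕ) ≤ (j : ℕ) then
    (-1 : F) ^ ((j : ℕ) - (i : ℕ)) * (((j : ℕ) - 1).choose ((j : ℕ) - (i : ℕ)) : ℕ) else 0

lemma mul_nb_apply {s : ℕ} (M : Matrix (Fin s) (Fin s) F) (i j : Fin s) :
    (M * Nb F s) i j = if h : 1 ≤ (j : ℕ) then M i ⟨(j : ℕ) - 1, by have := j.isLt; omega⟩ else 0 := by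
  rw [Matrix.mul_apply]
  have step : ∀ t : Fin s, M i t * Nb F s t j
      = if (t : ℕ) = (j : ℕ) - 1 then (if 1 ≤ (j : ℕ) then M i t else 0) else 0 := by
    intro t
    rw [Nb_apply]
    split_ifs with h1 h2 h2 <;> first | ring1 | (exfalso; omega)
  simp_rw [step]
  rw [sum_ite_coe]
  have hj := j.isLt
  split_ifs with h1 h2 h2 <;> first | rfl | (exfalso; omega)

lemma nb_mul_apply {s : ℕ} (M : Matrix (Fin s) (Fin s) F) (i j : Fin s) :
    (Nb F s * M) i j = if h : (i : ℕ) + 1 < s then M ⟨(i : ℕ) + 1, h⟩ j else 0 := by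
  rw [Matrix.mul_apply]
  have step : ∀ t : Fin s, Nb F s i t * M t j
      = if (t : ℕ) = (i : ℕ) + 1 then M t j else 0 := by
    intro t
    rw [Nb_apply]
    split_ifs with h1 <;> ring
  simp_rw [step]
  rw [sum_ite_coe]

lemma Tm_conj (s : ℕ) : Tm F s * Nb F s = Nb F s * Tm F s * jordanBlock F s := by
  ext i j
  rw [jordan_eq_one_add, mul_add, mul_one, Matrix.add_apply]
  simp only [mul_nb_apply, nb_mul_apply]
  have hi := i.isLt
  have hj := j.isLt
  have pascal : ∀ i' j' : ℕ, i' + 1 < j' → j' ≤ s →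
      ((-1 : F)) ^ (j' - 1 - i') * ((j' - 1 - 1).choose (j' - 1 - i') : ℕ)
        = (-1) ^ (j' - (i' + 1)) * ((j' - 1).choose (j' - (i' + 1)) : ℕ)
          + (-1) ^ (j' - 1 - (i' + 1)) * ((j' - 1 - 1).choose (j' - 1 - (i' + 1)) : ℕ) := by
    intro i' j' hij hjs
    set w := j' - 2 - i' with hw
    have e1 : j' - 1 - i' = w + 1 := by omega
    have e2 : j' - (i' + 1) = w + 1 := by omega
    have e3 : j' - 1 - (i' + 1) = w := by omega
    have e4 : j' - 1 - 1 = j' - 2 := by omega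
    have epas : ((j' - 1).choose (w + 1) : F)
        = ((j' - 2).choose w : ℕ) + ((j' - 2).choose (w + 1) : ℕ) := by
      have h := Nat.choose_succ_succ (j' - 2) w
      rw [show (j' - 2).succ = j' - 1 by omega] at h
      rw [show w.succ = w + 1 from rfl] at h
      rw [h]
      push_cast
      ring
    rw [e1, e2, e3, e4, epas, pow_succ]
    ring
  split_ifs with h1 h2 h3
  · -- 1 ≤ j, i+1 < s
    simp only [Tm, Matrix.of_apply]
    rcases Nat.lt_or_ge ((j : ℕ)) ((i : ℕ) + 1) with hc | hc
    · rw [if_neg (by omega), if_neg (by omega), if_neg (by omega)]; ring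
    · rcases eq_or_lt_of_le hc with hc2 | hc2
      · rw [if_pos (by omega), if_pos (by omega), if_neg (by omega)]
        rw [show (j : ℕ) - 1 - (i : ℕ) = 0 by omega, show (j : ℕ) - ((i : ℕ) + 1) = 0 by omega]
        simp
      · rw [if_pos (by omega), if_pos (by omega), if_pos (by omega)]
        exact pascal (i : ℕ) (j : ℕ) hc2 (by omega)
  · -- 1 ≤ j, ¬(i+1 < s)
    simp only [Tm, Matrix.of_apply]
    rw [if_neg (by omega)]
    ring
  · -- ¬(1 ≤ j), i+1 < s
    simp only [Tm, Matrix.of_apply]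
    rw [if_neg (by omega)]
    ring
  · ring

end MX2

section MX3

variable {F : Type*} [Field F]

lemma det_Tm (s : ℕ) : (Tm F s).det = 1 := by
  have hbt : (Tm F s).BlockTriangular id := by
    intro i j hij
    simp only [Tm, Matrix.of_apply, id] at hij ⊢
    rw [if_neg]
    rw [Fin.lt_def] at hij
    omega
  rw [Matrix.det_of_upperTriangular hbt]
  apply Finset.prod_eq_one
  intro i _
  simp [Tm]

lemma det_Jb (s : ℕ) : (jordanBlock F s).det = 1 := by
  have hbt : (jordanBlock F s).BlockTriangular id := by
    intro i j hij
    simp only [jordanBlock, Matrix.of_apply, id] at hij ⊢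
    rw [Fin.lt_def] at hij
    rw [if_neg (by rw [Fin.ext_iff]; omega), if_neg (by omega)]
  rw [Matrix.det_of_upperTriangular hbt]
  apply Finset.prod_eq_one
  intro i _
  simp [jordanBlock]

lemma rank_X_pow_eq (r s : ℕ) (n : ℕ) :
    ((jordanBlock F r ⊗ₖ jordanBlock F s - 1) ^ n).rank
      = ((Nb F r ⊗ₖ (1 : Matrix (Fin s) (Fin s) F)
          + (1 : Matrix (Fin r) (Fin r) F) ⊗ₖ Nb F s) ^ n).rank := by
  set A := Nb F r ⊗ₖ (1 : Matrix (Fin s) (Fin s) F) with hA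
  set Q := (1 : Matrix (Fin r) (Fin r) F) ⊗ₖ Nb F s with hQ
  set G := (1 : Matrix (Fin r) (Fin r) F) ⊗ₖ Tm F s with hG
  set H := (1 : Matrix (Fin r) (Fin r) F) ⊗ₖ jordanBlock F s with hH
  set X := jordanBlock F r ⊗ₖ jordanBlock F s - 1 with hX
  set Y := A + Q with hY
  have hXdef : X = A * H + Q := by
    have hAH' : A * H = Nb F r ⊗ₖ jordanBlock F s := by
      rw [hA, hH, ← Matrix.mul_kronecker_mul, mul_one, one_mul]
    have h1 : jordanBlock F r ⊗ₖ jordanBlock F s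
        = (1 : Matrix (Fin r) (Fin r) F) ⊗ₖ jordanBlock F s + Nb F r ⊗ₖ jordanBlock F s := by
      rw [← Matrix.add_kronecker, ← jordan_eq_one_add]
    have h2 : (1 : Matrix (Fin r) (Fin r) F) ⊗ₖ jordanBlock F s
        = (1 : Matrix (Fin r) (Fin r) F) ⊗ₖ (1 : Matrix (Fin s) (Fin s) F)
          + (1 : Matrix (Fin r) (Fin r) F) ⊗ₖ Nb F s := by
      rw [← Matrix.kronecker_add, ← jordan_eq_one_add]
    rw [hX, h1, h2, hAH', Matrix.one_kronecker_one, ← hQ]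
    abel
  have hAH : Commute A H := by
    show A * H = H * A
    rw [hA, hH]
    simp only [← Matrix.mul_kronecker_mul, one_mul, mul_one]
  have hAQ : Commute A Q := by
    show A * Q = Q * A
    rw [hA, hQ]
    simp only [← Matrix.mul_kronecker_mul, one_mul, mul_one]
  have hAG : Commute A G := by
    show A * G = G * A
    rw [hA, hG]
    simp only [← Matrix.mul_kronecker_mul, one_mul, mul_one]
  have hNJ : Nb F s * jordanBlock F s = jordanBlock F s * Nb F s := by
    rw [jordan_eq_one_add, mul_add, add_mul, mul_one, one_mul]
  have hQH : Commute Q H := by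
    show Q * H = H * Q
    rw [hQ, hH]
    simp only [← Matrix.mul_kronecker_mul, one_mul, mul_one]
    rw [hNJ]
  have hTN : Tm F s * Nb F s = Nb F s * (Tm F s * jordanBlock F s) := by
    rw [Tm_conj, mul_assoc]
  have hGQH : G * Q = Q * (G * H) := by
    rw [hG, hQ, hH]
    simp only [← Matrix.mul_kronecker_mul, one_mul, mul_one]
    rw [hTN]
  have hXH : Commute X H := by
    rw [hXdef]
    exact Commute.add_left (hAH.mul_left (Commute.refl H)) hQH
  have hGX : G * X = Y * (G * H) := by
    rw [hXdef, mul_add, hGQH, hY, add_mul]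
    congr 1
    rw [← mul_assoc, ← hAG.eq, mul_assoc]
  have key : ∀ m : ℕ, G * X ^ m = Y ^ m * (G * H ^ m) := by
    intro m
    induction m with
    | zero => simp
    | succ m ih =>
      have hHX : H ^ m * X = X * H ^ m := ((hXH.symm).pow_left m).eq
      calc G * X ^ (m + 1) = (G * X ^ m) * X := by rw [pow_succ, mul_assoc]
        _ = Y ^ m * (G * (H ^ m * X)) := by rw [ih, mul_assoc, mul_assoc]
        _ = Y ^ m * ((G * X) * H ^ m) := by rw [hHX, ← mul_assoc G X]
        _ = Y ^ m * ((Y * (G * H)) * H ^ m) := by rw [hGX]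
        _ = Y ^ (m + 1) * (G * H ^ (m + 1)) := by
            rw [pow_succ, pow_succ']
            noncomm_ring
  have hdetG : IsUnit G.det := by
    rw [hG, Matrix.det_kronecker, det_Tm, Matrix.det_one, one_pow, one_pow, mul_one]
    exact isUnit_one
  have hdetH : IsUnit H.det := by
    rw [hH, Matrix.det_kronecker, det_Jb, Matrix.det_one, one_pow, one_pow, mul_one]
    exact isUnit_one
  have hdetGH : IsUnit (G * H ^ n).det := by
    rw [Matrix.det_mul, Matrix.det_pow]
    exact hdetG.mul (hdetH.pow n)
  calc (X ^ n).rank = (G * X ^ n).rank :=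
        (Matrix.rank_mul_eq_right_of_isUnit_det G (X ^ n) hdetG).symm
    _ = (Y ^ n * (G * H ^ n)).rank := by rw [key n]
    _ = (Y ^ n).rank := Matrix.rank_mul_eq_left_of_isUnit_det (G * H ^ n) (Y ^ n) hdetGH

end MX3

section MX4

variable {F : Type*} [Field F]

lemma kron_pow_left {r s : ℕ} (M : Matrix (Fin r) (Fin r) F) (a : ℕ) :
    (M ⊗ₖ (1 : Matrix (Fin s) (Fin s) F)) ^ a = (M ^ a) ⊗ₖ (1 : Matrix (Fin s) (Fin s) F) := by
  induction a with
  | zero => rw [pow_zero, pow_zero, Matrix.one_kronecker_one]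
  | succ a ih => rw [pow_succ, pow_succ, ih, ← Matrix.mul_kronecker_mul, mul_one]

lemma kron_pow_right {r s : ℕ} (M : Matrix (Fin s) (Fin s) F) (a : ℕ) :
    ((1 : Matrix (Fin r) (Fin r) F) ⊗ₖ M) ^ a = (1 : Matrix (Fin r) (Fin r) F) ⊗ₖ (M ^ a) := by
  induction a with
  | zero => rw [pow_zero, pow_zero, Matrix.one_kronecker_one]
  | succ a ih => rw [pow_succ, pow_succ, ih, ← Matrix.mul_kronecker_mul, mul_one]

lemma Ypow (r s n : ℕ) :
    (Nb F r ⊗ₖ (1 : Matrix (Fin s) (Fin s) F) + (1 : Matrix (Fin r) (Fin r) F) ⊗ₖ Nb F s) ^ n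
      = ∑ a ∈ Finset.range (n + 1),
          ((n.choose a : ℕ) : F) • ((Nb F r ^ a) ⊗ₖ (Nb F s ^ (n - a))) := by
  have hc : Commute (Nb F r ⊗ₖ (1 : Matrix (Fin s) (Fin s) F))
      ((1 : Matrix (Fin r) (Fin r) F) ⊗ₖ Nb F s) := by
    show _ * _ = _ * _
    simp only [← Matrix.mul_kronecker_mul, one_mul, mul_one]
  rw [hc.add_pow]
  apply Finset.sum_congr rfl
  intro a _
  rw [kron_pow_left, kron_pow_right, ← Matrix.mul_kronecker_mul, mul_one, one_mul]
  rw [show ((n.choose a : ℕ) : Matrix (Fin r × Fin s) (Fin r × Fin s) F)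
      = ((n.choose a : ℕ) : F) • (1 : Matrix (Fin r × Fin s) (Fin r × Fin s) F) by
    rw [Nat.cast_smul_eq_nsmul, nsmul_eq_mul, mul_one]]
  rw [mul_smul_comm, mul_one]

lemma neg_one_mul_self (a : ℕ) : (-1 : F) ^ a * (-1 : F) ^ a = 1 := by
  rw [← pow_add, show a + a = 2 * a by ring, pow_mul]
  norm_num

lemma rank_Z (r s k : ℕ) (hk1 : 1 ≤ k) (hkr : k ≤ r) (hks : k ≤ s) :
    (∑ c ∈ Finset.range k, ((-1 : F) ^ c) •
        ((Nb F r ^ (r - k + c)) ⊗ₖ (Nb F s ^ (s - 1 - c)))).rank = k := by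
  set n₀ := r + s - 1 - k with hn₀
  set Z := ∑ c ∈ Finset.range k, ((-1 : F) ^ c) •
      ((Nb F r ^ (r - k + c)) ⊗ₖ (Nb F s ^ (s - 1 - c))) with hZ
  have hZapp : ∀ q q' : Fin r × Fin s, Z q q'
      = ∑ c ∈ Finset.range k, (-1 : F) ^ c *
          ((if (q'.1 : ℕ) = (q.1 : ℕ) + (r - k + c) then 1 else 0) *
           (if (q'.2 : ℕ) = (q.2 : ℕ) + (s - 1 - c) then 1 else 0)) := by
    intro q q'
    rw [hZ, Matrix.sum_apply]
    apply Finset.sum_congr rfl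
    intro c _
    rw [Matrix.smul_apply, Matrix.kroneckerMap_apply, Nb_pow_apply, Nb_pow_apply, smul_eq_mul]
  have hZapp' : ∀ (a b a' b' : ℕ) (ha : a < r) (hb : b < s) (ha' : a' < r) (hb' : b' < s),
      Z (⟨a, ha⟩, ⟨b, hb⟩) (⟨a', ha'⟩, ⟨b', hb'⟩)
        = ∑ c ∈ Finset.range k, (-1 : F) ^ c *
            ((if a' = a + (r - k + c) then 1 else 0) *
             (if b' = b + (s - 1 - c) then 1 else 0)) := by
    intro a b a' b' ha hb ha' hb'
    exact hZapp _ _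
  set B : Matrix (Fin r × Fin s) (Fin k) F := Matrix.of fun q t =>
    if (q.1 : ℕ) + (q.2 : ℕ) = (t : ℕ) then (-1 : F) ^ ((q.1 : ℕ) + (r - k)) else 0 with hB
  set C : Matrix (Fin k) (Fin r × Fin s) F := Matrix.of fun t q =>
    if (q.1 : ℕ) + (q.2 : ℕ) = n₀ + (t : ℕ) then (-1 : F) ^ ((q.1 : ℕ)) else 0 with hC
  have hZBC : Z = B * C := by
    ext q q'
    obtain ⟨i, j⟩ := q
    obtain ⟨i', j'⟩ := q'
    have hi := i.isLt
    have hj := j.isLt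
    have hi' := i'.isLt
    have hj' := j'.isLt
    rw [Matrix.mul_apply, hZapp]
    simp only [hB, hC, Matrix.of_apply]
    by_cases hex : ∃ c, c < k ∧ (i' : ℕ) = (i : ℕ) + (r - k + c)
        ∧ (j' : ℕ) + c = (j : ℕ) + (s - 1)
    · obtain ⟨c₀, hc₀k, hci, hcj⟩ := hex
      have hL : (∑ c ∈ Finset.range k, (-1 : F) ^ c *
          ((if (i' : ℕ) = (i : ℕ) + (r - k + c) then 1 else 0) *
           (if (j' : ℕ) = (j : ℕ) + (s - 1 - c) then 1 else 0))) = (-1 : F) ^ c₀ := by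
        rw [Finset.sum_eq_single c₀]
        · rw [if_pos hci, if_pos (by omega)]; ring1
        · intro c hc hne
          rw [Finset.mem_range] at hc
          rw [if_neg (by omega)]; ring1
        · intro h; exact absurd (Finset.mem_range.mpr hc₀k) h
      have ht₀k : (i : ℕ) + (j : ℕ) < k := by omega
      have hR : (∑ t : Fin k,
          (if (i : ℕ) + (j : ℕ) = (t : ℕ) then (-1 : F) ^ ((i : ℕ) + (r - k)) else 0) *
          (if (i' : ℕ) + (j' : ℕ) = n₀ + (t : ℕ) then (-1 : F) ^ ((i' : ℕ)) else 0))
          = (-1 : F) ^ ((i : ℕ) + (r - k)) * (-1 : F) ^ ((i' : ℕ)) := by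
        rw [Finset.sum_eq_single (⟨(i : ℕ) + (j : ℕ), ht₀k⟩ : Fin k)]
        · rw [if_pos rfl, if_pos (by simp; omega)]
        · intro t _ hne
          have hne' : ¬ ((i : ℕ) + (j : ℕ) = (t : ℕ)) := by
            intro h
            exact hne (Fin.val_inj.mp (by simp; omega))
          rw [if_neg hne']
          ring1
        · intro h; exact absurd (Finset.mem_univ _) h
      rw [hL, hR, hci]
      rw [show ((i : ℕ) + (r - k + c₀)) = ((i : ℕ) + (r - k)) + c₀ by omega]
      rw [pow_add (-1 : F) ((i : ℕ) + (r - k)) c₀, ← mul_assoc, neg_one_mul_self, one_mul]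
    · have hL : (∑ c ∈ Finset.range k, (-1 : F) ^ c *
          ((if (i' : ℕ) = (i : ℕ) + (r - k + c) then 1 else 0) *
           (if (j' : ℕ) = (j : ℕ) + (s - 1 - c) then 1 else 0))) = 0 := by
        apply Finset.sum_eq_zero
        intro c hc
        rw [Finset.mem_range] at hc
        by_cases h1 : (i' : ℕ) = (i : ℕ) + (r - k + c)
        · by_cases h2 : (j' : ℕ) = (j : ℕ) + (s - 1 - c)
          · exact absurd ⟨c, hc, h1, by omega⟩ hex
          · rw [if_neg h2]; ring1
        · rw [if_neg h1]; ring1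
      have hR : (∑ t : Fin k,
          (if (i : ℕ) + (j : ℕ) = (t : ℕ) then (-1 : F) ^ ((i : ℕ) + (r - k)) else 0) *
          (if (i' : ℕ) + (j' : ℕ) = n₀ + (t : ℕ) then (-1 : F) ^ ((i' : ℕ)) else 0)) = 0 := by
        apply Finset.sum_eq_zero
        intro t _
        by_cases ht1 : (i : ℕ) + (j : ℕ) = (t : ℕ)
        · by_cases ht2 : (i' : ℕ) + (j' : ℕ) = n₀ + (t : ℕ)
          · exfalso
            have htk := t.isLt
            exact hex ⟨(i' : ℕ) - ((i : ℕ) + (r - k)), by omega, by omega, by omega⟩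
          · rw [if_neg ht2]; ring1
        · rw [if_neg ht1]; ring1
      rw [hL, hR]
  set D : Matrix (Fin k) (Fin r × Fin s) F := Matrix.of fun t q =>
    if (q.1 : ℕ) = (t : ℕ) ∧ (q.2 : ℕ) = 0 then 1 else 0 with hD
  set E : Matrix (Fin r × Fin s) (Fin k) F := Matrix.of fun q t =>
    if (q.1 : ℕ) = (r - k) + (t : ℕ) ∧ (q.2 : ℕ) = s - 1 then 1 else 0 with hE
  have hDZE : (D * Z) * E = 1 := by
    ext t u
    have htk := t.isLt
    have huk := u.isLt
    have hq₀ : ((t : ℕ) : ℕ) < r := by omega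
    have hs0 : 0 < s := by omega
    have hq₁ : r - k + (u : ℕ) < r := by omega
    have hs1 : s - 1 < s := by omega
    have hDZ : ∀ q' : Fin r × Fin s, (D * Z) t q' = Z (⟨(t : ℕ), hq₀⟩, ⟨0, hs0⟩) q' := by
      intro q'
      rw [Matrix.mul_apply]
      rw [Finset.sum_eq_single ((⟨(t : ℕ), hq₀⟩, ⟨0, hs0⟩) : Fin r × Fin s)]
      · rw [hD]; simp
      · intro q _ hne
        rw [hD, Matrix.of_apply, if_neg, zero_mul]
        intro ⟨ha, hb⟩
        apply hne
        ext
        · simpa using ha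
        · simpa using hb
      · intro h; exact absurd (Finset.mem_univ _) h
    rw [Matrix.mul_apply]
    simp_rw [hDZ]
    rw [Finset.sum_eq_single ((⟨r - k + (u : ℕ), hq₁⟩, ⟨s - 1, hs1⟩) : Fin r × Fin s)]
    · rw [hE, Matrix.of_apply, if_pos (by simp), mul_one]
      rw [hZapp']
      rcases eq_or_ne t u with heq | hne
      · subst heq
        rw [Finset.sum_eq_single 0]
        · rw [if_pos (by omega), if_pos (by omega), Matrix.one_apply_eq]
          norm_num
        · intro c hc hne0
          rw [Finset.mem_range] at hc
          rw [if_neg (show ¬ (s - 1 = 0 + (s - 1 - c)) by omega)]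
          ring1
        · intro h; exact absurd (Finset.mem_range.mpr (by omega)) h
      · rw [Matrix.one_apply_ne hne]
        apply Finset.sum_eq_zero
        intro c hc
        rw [Finset.mem_range] at hc
        by_cases h2 : (s - 1 : ℕ) = 0 + (s - 1 - c)
        · have hc0 : c = 0 := by omega
          subst hc0
          rw [if_neg (show ¬ (r - k + (u : ℕ) = (t : ℕ) + (r - k + 0)) by
            intro hcon
            exact hne (Fin.val_inj.mp (by omega : (t : ℕ) = (u : ℕ))))]
          ring1
        · rw [if_neg h2]; ring1
    · intro q _ hne
      rw [hE, Matrix.of_apply, if_neg, mul_zero]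
      intro ⟨ha, hb⟩
      apply hne
      ext
      · simpa using ha
      · simpa using hb
    · intro h; exact absurd (Finset.mem_univ _) h
  refine le_antisymm ?_ ?_
  · rw [hZBC]
    calc (B * C).rank ≤ C.rank := Matrix.rank_mul_le_right B C
      _ ≤ Fintype.card (Fin k) := Matrix.rank_le_card_height C
      _ = k := Fintype.card_fin k
  · have h1 : ((D * Z) * E).rank = k := by rw [hDZE, Matrix.rank_one, Fintype.card_fin]
    calc k = ((D * Z) * E).rank := h1.symm
      _ ≤ (D * Z).rank := Matrix.rank_mul_le_left (D * Z) E
      _ ≤ Z.rank := Matrix.rank_mul_le_right D Z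

end MX4

/-- If `k ≥ 1` is minimal with `p ∤ C(r+s-1-k, r-1)`, then the largest part of
the Jordan partition of `J_r ⊗ J_s` is `λ_1 = r+s-k`, with multiplicity `k`. -/
theorem stmt7 (F : Type*) [Field F] (p : ℕ) [CharP F p] (hp : p.Prime)
    (r s : ℕ) (hr : 1 ≤ r) (hrs : r ≤ s) (k : ℕ) (hk : 1 ≤ k)
    (hknd : ¬ p ∣ (r + s - 1 - k).choose (r - 1))
    (hkmin : ∀ j : ℕ, 1 ≤ j → j < k → p ∣ (r + s - 1 - j).choose (r - 1))
    (lam : Fin r → ℕ)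
    (hlam : IsJordanSeq (jordanBlock F r ⊗ₖ jordanBlock F s) lam) :
    lam ⟨0, hr⟩ = r + s - k ∧
    (Finset.univ.filter fun i : Fin r => lam i = r + s - k).card = k := by
  obtain ⟨hmono, hpos, hrank⟩ := hlam
  haveI : Fact p.Prime := ⟨hp⟩
  have hp2 := hp.two_le
  have hks : k ≤ s := by
    by_contra hcon
    push_neg at hcon
    have hdvd := hkmin s (by omega) hcon
    rw [show r + s - 1 - s = r - 1 by omega, Nat.choose_self, Nat.dvd_one] at hdvd
    omega
  set n₀ := r + s - 1 - k with hn₀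
  have hmin' : ∀ t, 1 ≤ t → t < k → p ∣ (n₀ + t).choose (r - 1) := by
    intro t h1 h2
    have h := hkmin (k - t) (by omega) (by omega)
    rwa [show r + s - 1 - (k - t) = n₀ + t by omega] at h
  obtain ⟨hkr, hdvd1, hnd2, hgeom⟩ := aux_main_nt hp r s k hr hrs hk hks hknd hmin'
  -- rank of the (r+s-k)-th power is zero
  have hrank0 : ((jordanBlock F r ⊗ₖ jordanBlock F s - 1) ^ (r + s - k)).rank = 0 := by
    rw [rank_X_pow_eq, Ypow]
    have hzero : ∀ a ∈ Finset.range (r + s - k + 1),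
        (((r + s - k).choose a : ℕ) : F) • ((Nb F r ^ a) ⊗ₖ (Nb F s ^ (r + s - k - a))) = 0 := by
      intro a ha
      rw [Finset.mem_range] at ha
      rcases le_or_gt r a with h | h
      · rw [Nb_pow_zero h, Matrix.zero_kronecker, smul_zero]
      · rcases le_or_gt s (r + s - k - a) with h2 | h2
        · rw [Nb_pow_zero h2, Matrix.kronecker_zero, smul_zero]
        · have hdvd := hdvd1 a (by omega) (by omega)
          have hcast : (((r + s - k).choose a : ℕ) : F) = 0 := by
            rw [CharP.cast_eq_zero_iff F p]; exact hdvd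
          rw [hcast, zero_smul]
    rw [Finset.sum_eq_zero hzero, Matrix.rank_zero]
  -- rank of the n₀-th power is k
  have hrank1 : ((jordanBlock F r ⊗ₖ jordanBlock F s - 1) ^ n₀).rank = k := by
    rw [rank_X_pow_eq, Ypow]
    have hsub : Finset.Ico (r - k) r ⊆ Finset.range (n₀ + 1) := by
      intro a ha; rw [Finset.mem_Ico] at ha; rw [Finset.mem_range]; omega
    have hvanish : ∀ a ∈ Finset.range (n₀ + 1), a ∉ Finset.Ico (r - k) r →
        ((n₀.choose a : ℕ) : F) • ((Nb F r ^ a) ⊗ₖ (Nb F s ^ (n₀ - a))) = 0 := by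
      intro a _ ha
      rw [Finset.mem_Ico] at ha
      rcases Nat.lt_or_ge a (r - k) with h | h
      · rw [Nb_pow_zero (show s ≤ n₀ - a by omega), Matrix.kronecker_zero, smul_zero]
      · have hra : r ≤ a := by
          by_contra hc
          exact ha ⟨h, by omega⟩
        rw [Nb_pow_zero hra, Matrix.zero_kronecker, smul_zero]
    rw [← Finset.sum_subset hsub hvanish, Finset.sum_Ico_eq_sum_range,
      show r - (r - k) = k by omega]
    have hterm : ∀ c ∈ Finset.range k,
        ((n₀.choose (r - k + c) : ℕ) : F) •
            ((Nb F r ^ (r - k + c)) ⊗ₖ (Nb F s ^ (n₀ - (r - k + c))))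
          = ((n₀.choose (r - k) : ℕ) : F) •
            (((-1 : F) ^ c) • ((Nb F r ^ (r - k + c)) ⊗ₖ (Nb F s ^ (s - 1 - c)))) := by
      intro c hc
      rw [Finset.mem_range] at hc
      rw [show n₀ - (r - k + c) = s - 1 - c by omega, smul_smul]
      congr 1
      have hz := hgeom c hc
      have hzF : ((n₀.choose (r - k + c) : ℕ) : F) = (-1) ^ c * ((n₀.choose (r - k) : ℕ) : F) := by
        have h2 := congrArg (ZMod.castHom (dvd_refl p) F) hz
        simpa only [map_natCast, _root_.map_mul, map_pow, map_neg, _root_.map_one] using h2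
      rw [hzF, mul_comm]
    rw [Finset.sum_congr rfl hterm, ← Finset.smul_sum]
    have hγ : ((n₀.choose (r - k) : ℕ) : F) ≠ 0 := by
      rw [Ne, CharP.cast_eq_zero_iff F p]; exact hnd2
    set Zs := ∑ c ∈ Finset.range k, ((-1 : F) ^ c) •
        ((Nb F r ^ (r - k + c)) ⊗ₖ (Nb F s ^ (s - 1 - c))) with hZs
    have hsm : ((n₀.choose (r - k) : ℕ) : F) • Zs
        = (((n₀.choose (r - k) : ℕ) : F) • (1 : Matrix (Fin r × Fin s) (Fin r × Fin s) F)) * Zs := by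
      rw [Matrix.smul_mul, one_mul]
    have hdet : IsUnit (((n₀.choose (r - k) : ℕ) : F) •
        (1 : Matrix (Fin r × Fin s) (Fin r × Fin s) F)).det := by
      rw [Matrix.det_smul, Matrix.det_one, mul_one]
      exact (pow_ne_zero _ hγ).isUnit
    rw [hsm, Matrix.rank_mul_eq_right_of_isUnit_det _ _ hdet]
    exact rank_Z r s k hk hkr hks
  -- combinatorial wrap-up
  have hallle : ∀ i : Fin r, lam i ≤ r + s - k := by
    have h0 := hrank (r + s - k)
    rw [hrank0] at h0
    intro i
    have h1 : lam i - (r + s - k) = 0 :=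
      Finset.sum_eq_zero_iff.mp h0.symm i (Finset.mem_univ i)
    omega
  have hsum : ∑ i : Fin r, (lam i - n₀) = k := by rw [← hrank n₀, hrank1]
  have hcard : (Finset.univ.filter fun i : Fin r => lam i = r + s - k).card = k := by
    rw [Finset.card_filter, ← hsum]
    apply Finset.sum_congr rfl
    intro i _
    have h1 := hallle i
    split_ifs with h <;> omega
  refine ⟨?_, hcard⟩
  have hnonempty : (Finset.univ.filter fun i : Fin r => lam i = r + s - k).Nonempty := by
    apply Finset.card_pos.mp
    omega
  obtain ⟨i₀, hi₀mem⟩ := hnonempty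
  have hi₀ : lam i₀ = r + s - k := (Finset.mem_filter.mp hi₀mem).2
  have hle : lam i₀ ≤ lam ⟨0, hr⟩ := hmono (show (⟨0, hr⟩ : Fin r) ≤ i₀ by
    rw [Fin.le_def]
    exact Nat.zero_le _)
  have h2 := hallle ⟨0, hr⟩
  omega
end

section
/- The unipotent matrix J_r \u2297 J_s and the matrix J_r \u2297 I_s + I_r \u2297 J_s have the same Jordan block structure: more precisely, in A = F[X,Y]/(X^r,Y^s), multiplication by (1+x)(1+y) - 1 = x+y+xy is similar as an F-linear map to multiplication by x+y, via the basis change sending x^i y^j to x^i (1+y)^i y^j. -/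
open MvPolynomial

lemma xq_pow_r (F : Type*) [Field F] (r s : ℕ) : xq F r s ^ r = 0 := by
  rw [xq, ← map_pow, Ideal.Quotient.eq_zero_iff_mem]
  exact Ideal.subset_span (Set.mem_insert _ _)

lemma yq_pow_s (F : Type*) [Field F] (r s : ℕ) : yq F r s ^ s = 0 := by
  rw [yq, ← map_pow, Ideal.Quotient.eq_zero_iff_mem]
  exact Ideal.subset_span (Set.mem_insert_of_mem _ rfl)

set_option maxHeartbeats 1000000 in
/-- Multiplication by `(1+x)(1+y) - 1 = x+y+xy` on `A = F[X,Y]/(X^r,Y^s)` is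
similar, as an `F`-linear map, to multiplication by `x+y`, via the basis change
sending `x^i y^j` to `x^i (1+y)^i y^j`.  (Hence `J_r ⊗ J_s` and
`J_r ⊗ I_s + I_r ⊗ J_s` have the same Jordan block structure.) -/
theorem stmt8 (F : Type*) [Field F] (r s : ℕ) (hr : 1 ≤ r) (hrs : r ≤ s) :
    ∃ e : Aq F r s ≃ₗ[F] Aq F r s,
      (∀ i j : ℕ, i < r → j < s →
        e (xq F r s ^ i * yq F r s ^ j) =
          xq F r s ^ i * (1 + yq F r s) ^ i * yq F r s ^ j) ∧
      ∀ a : Aq F r s,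
        e a * (xq F r s + yq F r s + xq F r s * yq F r s) =
          e (a * (xq F r s + yq F r s)) := by
  set x := xq F r s with hx
  set y := yq F r s with hy
  have hxr : x ^ r = 0 := xq_pow_r F r s
  have hys : y ^ s = 0 := yq_pow_s F r s
  have hnil : IsNilpotent y := ⟨s, hys⟩
  obtain ⟨u, hu⟩ := hnil.isUnit_one_add
  -- algebra hom lifting helper
  have lift : ∀ v : Aq F r s, (v ^ r = 0) →
      ∃ φ : Aq F r s →ₐ[F] Aq F r s, φ x = v ∧ φ y = y := by
    intro v hv
    have h0 : Irs F r s ≤ RingHom.ker (aeval ![v, y] : MvPolynomial (Fin 2) F →ₐ[F] Aq F r s) :=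
      Ideal.span_le.mpr (by rintro q (rfl | rfl) <;> simp [RingHom.mem_ker, hv, hys])
    refine ⟨Ideal.Quotient.liftₐ _ _ (fun p hp => RingHom.mem_ker.mp (h0 hp)), ?_, ?_⟩
    · show (aeval ![v, y] : MvPolynomial (Fin 2) F →ₐ[F] Aq F r s) (X 0) = v; simp
    · show (aeval ![v, y] : MvPolynomial (Fin 2) F →ₐ[F] Aq F r s) (X 1) = y; simp
  have hv1 : (x * (1 + y)) ^ r = 0 := by rw [mul_pow, hxr, zero_mul]
  have hv2 : (x * ↑u⁻¹) ^ r = 0 := by rw [mul_pow, hxr, zero_mul]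
  obtain ⟨φ, hφx, hφy⟩ := lift _ hv1
  obtain ⟨ψ, hψx, hψy⟩ := lift _ hv2
  have hcomp : ∀ (f g : Aq F r s →ₐ[F] Aq F r s),
      f (g x) = x → f (g y) = y → f.comp g = AlgHom.id F (Aq F r s) := by
    intro f g h1 h2
    apply Ideal.Quotient.algHom_ext
    apply MvPolynomial.algHom_ext
    intro i
    fin_cases i
    · simpa [hx, xq] using h1
    · simpa [hy, yq] using h2
  have huu : (↑u⁻¹ : Aq F r s) * (1 + y) = 1 := by
    rw [← hu]; exact u.inv_mul
  have h1 : ψ.comp φ = AlgHom.id F (Aq F r s) := by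
    apply hcomp
    · rw [hφx, map_mul, hψx, map_add, map_one, hψy, mul_assoc, huu, mul_one]
    · rw [hφy, hψy]
  have huu' : (1 + y) * (↑u⁻¹ : Aq F r s) = 1 := by
    rw [← hu]; exact u.mul_inv
  have hφu : φ (↑u⁻¹ : Aq F r s) = ↑u⁻¹ := by
    have key : φ (↑u⁻¹ : Aq F r s) * (1 + y) = 1 := by
      have : φ ((↑u⁻¹ : Aq F r s) * (1 + y)) = 1 := by rw [huu, map_one]
      rwa [map_mul, map_add, map_one, hφy] at this
    calc φ (↑u⁻¹ : Aq F r s) = φ (↑u⁻¹ : Aq F r s) * ((1 + y) * ↑u⁻¹) := by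
          rw [huu', mul_one]
      _ = (φ (↑u⁻¹ : Aq F r s) * (1 + y)) * ↑u⁻¹ := by ring
      _ = ↑u⁻¹ := by rw [key, one_mul]
  have h2 : φ.comp ψ = AlgHom.id F (Aq F r s) := by
    apply hcomp
    · rw [hψx, map_mul, hφx, hφu, mul_assoc, mul_comm (1+y), huu, mul_one]
    · rw [hψy, hφy]
  refine ⟨LinearEquiv.ofLinear φ.toLinearMap ψ.toLinearMap
    (LinearMap.ext fun a => AlgHom.congr_fun h2 a)
    (LinearMap.ext fun a => AlgHom.congr_fun h1 a), ?_, ?_⟩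
  · intro i j _ _
    show φ (x ^ i * y ^ j) = x ^ i * (1 + y) ^ i * y ^ j
    rw [map_mul, map_pow, map_pow, hφx, hφy, mul_pow]
  · intro a
    show φ a * (x + y + x * y) = φ (a * (x + y))
    rw [map_mul, map_add, hφx, hφy]
    ring
end

section
/- Let F have characteristic p > 0, let m = \u2308log_p r\u2309 (so p^{m-1} < r \u2264 p^m), and suppose r \u2264 s. If the Jordan partition \u03bb(r,s,p) of J_r \u2297 J_s equals the uniform partition (s, \u2026, s), then s \u2261 0 (mod p^m). -/
open Matrix Kronecker

open Finset

lemma inner_alt (n t : ℕ) (ht : t ≤ n) :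
    ∑ i ∈ range (n+1), (-1:ℤ)^(n-i) * (n.choose i) * (i.choose t)
      = if t = n then 1 else 0 := by
  have hdrop : ∀ i ∈ Ico 0 t, (-1:ℤ)^(n-i) * (n.choose i) * (i.choose t) = 0 := by
    intro i hi
    simp only [mem_Ico] at hi
    rw [Nat.choose_eq_zero_of_lt hi.2]
    simp
  rw [range_eq_Ico, ← Finset.sum_Ico_consecutive _ (Nat.zero_le t) (by omega : t ≤ n + 1),
    Finset.sum_eq_zero hdrop, zero_add, Finset.sum_Ico_eq_sum_range]
  have hshape : ∀ u ∈ range (n + 1 - t),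
      (-1:ℤ)^(n-(t+u)) * (n.choose (t+u)) * ((t+u).choose t)
        = (n.choose t : ℤ) * ((-1)^(n-t) * ((-1:ℤ)^u * ((n-t).choose u))) := by
    intro u hu
    simp only [mem_range] at hu
    have h1 : n.choose (t+u) * (t+u).choose t = n.choose t * ((n-t).choose u) := by
      have := Nat.choose_mul (n := n) (show t ≤ t + u by omega)
      simpa using this
    have h1' := congrArg (Nat.cast : ℕ → ℤ) h1
    push_cast at h1'
    have h2 : (-1:ℤ)^(n-t) = (-1)^(n-(t+u)) * (-1)^u := by
      rw [show n - t = (n-(t+u)) + u by omega, pow_add]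
    have h3 : (-1:ℤ)^(u*2) = 1 := Even.neg_one_pow ⟨u, by ring⟩
    rw [h2]
    linear_combination ((-1:ℤ)^(n-(t+u))) * h1'
      - ((n.choose t : ℤ) * ((n-t).choose u) * (-1)^(n-(t+u))) * h3
  rw [Finset.sum_congr rfl hshape, ← Finset.mul_sum, ← Finset.mul_sum,
    show n + 1 - t = (n - t) + 1 by omega, Int.alternating_sum_range_choose]
  by_cases h : t = n
  · subst h; simp
  · rw [if_neg h, if_neg (by omega), mul_zero, mul_zero]

lemma key_id (a b : ℕ) :
    ∑ k ∈ range (a+b+1), (-1:ℤ)^(a+b-k) * ((a+b).choose k) * (k.choose a) * (k.choose b)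
      = (a+b).choose a := by
  have hdrop : ∀ k ∈ Ico 0 a,
      (-1:ℤ)^(a+b-k) * ((a+b).choose k) * (k.choose a) * (k.choose b) = 0 := by
    intro k hk; simp only [mem_Ico] at hk
    rw [Nat.choose_eq_zero_of_lt hk.2]; ring
  rw [range_eq_Ico, ← Finset.sum_Ico_consecutive _ (Nat.zero_le a) (by omega : a ≤ a+b+1),
    Finset.sum_eq_zero hdrop, zero_add, Finset.sum_Ico_eq_sum_range,
    show a + b + 1 - a = b + 1 by omega]
  have hshape : ∀ i ∈ range (b+1),
      (-1:ℤ)^(a+b-(a+i)) * ((a+b).choose (a+i)) * ((a+i).choose a) * ((a+i).choose b)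
        = ((a+b).choose a : ℤ) * ((-1)^(b-i) * (b.choose i) * ((a+i).choose b)) := by
    intro i hi; simp only [mem_range] at hi
    have h1 : (a+b).choose (a+i) * (a+i).choose a = (a+b).choose a * (b.choose i) := by
      have := Nat.choose_mul (n := a + b) (show a ≤ a + i by omega)
      simpa using this
    have h1' := congrArg (Nat.cast : ℕ → ℤ) h1
    push_cast at h1'
    rw [show a + b - (a+i) = b - i by omega]
    linear_combination ((-1:ℤ)^(b-i) * ((a+i).choose b)) * h1'
  rw [Finset.sum_congr rfl hshape, ← Finset.mul_sum]
  have hT : ∑ i ∈ range (b+1), (-1:ℤ)^(b-i) * (b.choose i) * ((a+i).choose b) = 1 := by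
    have hvd : ∀ i : ℕ, ((a+i).choose b : ℤ)
        = ∑ uv ∈ Finset.HasAntidiagonal.antidiagonal b, (a.choose uv.1 : ℤ) * (i.choose uv.2) := by
      intro i
      rw [Nat.add_choose_eq]
      push_cast
      rfl
    calc ∑ i ∈ range (b+1), (-1:ℤ)^(b-i) * (b.choose i) * ((a+i).choose b)
        = ∑ i ∈ range (b+1), ∑ uv ∈ Finset.HasAntidiagonal.antidiagonal b,
            (a.choose uv.1 : ℤ) * ((-1:ℤ)^(b-i) * (b.choose i) * (i.choose uv.2)) := by
          refine Finset.sum_congr rfl fun i _ => ?_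
          rw [hvd i, Finset.mul_sum]
          exact Finset.sum_congr rfl fun uv _ => by ring
      _ = ∑ uv ∈ Finset.HasAntidiagonal.antidiagonal b, (a.choose uv.1 : ℤ)
            * ∑ i ∈ range (b+1), (-1:ℤ)^(b-i) * (b.choose i) * (i.choose uv.2) := by
          rw [Finset.sum_comm]
          exact Finset.sum_congr rfl fun uv _ => by rw [Finset.mul_sum]
      _ = ∑ uv ∈ Finset.HasAntidiagonal.antidiagonal b, (a.choose uv.1 : ℤ)
            * (if uv.2 = b then 1 else 0) := by
          refine Finset.sum_congr rfl fun uv huv => ?_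
          rw [Finset.HasAntidiagonal.mem_antidiagonal] at huv
          rw [inner_alt b uv.2 (by omega)]
      _ = 1 := by
          rw [Finset.sum_eq_single (0, b)]
          · simp
          · intro uv huv hne
            rw [Finset.HasAntidiagonal.mem_antidiagonal] at huv
            have : uv.2 ≠ b := by
              intro h; apply hne
              have : uv.1 = 0 := by omega
              exact Prod.ext this h
            rw [if_neg this, mul_zero]
          · intro h
            exact absurd (Finset.HasAntidiagonal.mem_antidiagonal.mpr (by omega)) h
  rw [hT, mul_one]

lemma choose_pow_modeq (p : ℕ) (hp : p.Prime) : ∀ (j s : ℕ),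
    s.choose (p^j) ≡ (s / p^j) % p [MOD p] := by
  intro j
  induction j with
  | zero =>
    intro s
    simpa using (Nat.mod_modEq s p).symm
  | succ j ih =>
    intro s
    haveI : Fact p.Prime := ⟨hp⟩
    have h := Choose.choose_modEq_choose_mod_mul_choose_div_nat (p := p) (n := s) (k := p^(j+1))
    have h0 : p^(j+1) % p = 0 := by rw [pow_succ]; exact Nat.mul_mod_left _ p
    have h1 : p^(j+1) / p = p^j := by rw [pow_succ]; exact Nat.mul_div_cancel _ hp.pos
    rw [h0, Nat.choose_zero_right, one_mul, h1] at h
    have h2 : s / p / p ^ j = s / p ^ (j+1) := by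
      rw [Nat.div_div_eq_div_mul, ← pow_succ']
    exact h.trans (by rw [← h2]; exact ih (s / p))

lemma digits_dvd (p : ℕ) (hp : 1 < p) : ∀ (m s : ℕ),
    (∀ j < m, p ∣ (s / p^j) % p) → p^m ∣ s := by
  intro m
  induction m with
  | zero => intro s _; simpa using Nat.one_dvd s
  | succ m ih =>
    intro s h
    have h0 : p ∣ s % p := by simpa using h 0 (by omega)
    have hlt : s % p < p := Nat.mod_lt s (by omega)
    have hs : s % p = 0 := Nat.eq_zero_of_dvd_of_lt h0 hlt
    have hrest : p ^ m ∣ s / p := by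
      refine ih (s / p) fun j hj => ?_
      have h2 : s / p / p ^ j = s / p ^ (j+1) := by
        rw [Nat.div_div_eq_div_mul, ← pow_succ']
      rw [h2]
      exact h (j+1) (by omega)
    have : s = p * (s / p) := by
      have := Nat.div_add_mod s p
      omega
    rw [this, pow_succ']
    exact mul_dvd_mul_left p hrest

lemma dvd_pow_of_choose (p : ℕ) (hp : p.Prime) (m s : ℕ)
    (h : ∀ j < m, p ∣ s.choose (p^j)) : p^m ∣ s := by
  refine digits_dvd p hp.one_lt m s fun j hj => ?_
  have h1 : s / p ^ j % p ≡ 0 [MOD p] :=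
    (choose_pow_modeq p hp j s).symm.trans (Nat.modEq_zero_iff_dvd.mpr (h j hj))
  exact Nat.modEq_zero_iff_dvd.mp h1


section MatrixAux
variable {F : Type*} [Field F]

lemma jordan_sub_one_apply (n : ℕ) (l j : Fin n) :
    (jordanBlock F n - 1) l j = if (j : ℕ) = (l : ℕ) + 1 then 1 else 0 := by
  rcases eq_or_ne j l with h | h
  · subst h
    simp [jordanBlock, Matrix.sub_apply, Matrix.one_apply]
  · have hval : ((j : ℕ) = (l : ℕ)) = False := by
      simp [Fin.val_eq_val, h]
    simp [jordanBlock, Matrix.sub_apply, Matrix.one_apply, h, Ne.symm h]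

lemma jordan_sub_one_pow_apply (n t : ℕ) (i j : Fin n) :
    ((jordanBlock F n - 1) ^ t) i j = if (j : ℕ) = (i : ℕ) + t then 1 else 0 := by
  induction t generalizing i j with
  | zero =>
    simp only [pow_zero, Matrix.one_apply, add_zero]
    congr 1
    simp [eq_iff_iff, Fin.val_eq_val, eq_comm]
  | succ t ih =>
    rw [pow_succ, Matrix.mul_apply]
    by_cases h : (i : ℕ) + t < n
    · rw [Finset.sum_eq_single (⟨(i : ℕ) + t, h⟩ : Fin n)]
      · rw [ih, jordan_sub_one_apply]
        simp [add_assoc]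
      · intro l _ hl
        rw [ih, if_neg, zero_mul]
        intro hc
        exact hl (Fin.ext hc)
      · intro hmem
        exact absurd (Finset.mem_univ _) hmem
    · rw [Finset.sum_eq_zero, if_neg (by have := j.isLt; omega)]
      intro l _
      rw [ih, if_neg (by have := l.isLt; omega), zero_mul]

lemma jordanBlock_pow_apply (n k : ℕ) (i j : Fin n) (hij : (i : ℕ) ≤ j) :
    ((jordanBlock F n) ^ k) i j = (k.choose ((j : ℕ) - i) : F) := by
  have hJ : jordanBlock F n = 1 + (jordanBlock F n - 1) := by abel
  have expand : (jordanBlock F n) ^ k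
      = ∑ m ∈ Finset.range (k+1), k.choose m • (jordanBlock F n - 1) ^ (k - m) := by
    conv_lhs => rw [hJ]
    rw [(Commute.one_left (jordanBlock F n - 1)).add_pow]
    refine Finset.sum_congr rfl fun m _ => ?_
    rw [one_pow, one_mul, ← nsmul_eq_mul']
  rw [expand, Matrix.sum_apply]
  by_cases ha : (j : ℕ) - i ≤ k
  · rw [Finset.sum_eq_single (k - ((j : ℕ) - i))]
    · rw [Matrix.smul_apply, jordan_sub_one_pow_apply, if_pos (by omega),
        Nat.choose_symm ha]
      simp
    · intro m hm hne
      rw [Finset.mem_range] at hm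
      rw [Matrix.smul_apply, jordan_sub_one_pow_apply, if_neg (by omega), smul_zero]
    · intro hmem
      exact absurd (Finset.mem_range.mpr (by omega)) hmem
  · rw [Finset.sum_eq_zero, Nat.choose_eq_zero_of_lt (by omega), Nat.cast_zero]
    intro m hm
    rw [Finset.mem_range] at hm
    rw [Matrix.smul_apply, jordan_sub_one_pow_apply, if_neg (by omega), smul_zero]

lemma kronecker_pow {l n : ℕ} (A : Matrix (Fin l) (Fin l) F) (B : Matrix (Fin n) (Fin n) F)
    (k : ℕ) : (A ⊗ₖ B) ^ k = (A ^ k) ⊗ₖ (B ^ k) := by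
  induction k with
  | zero => simp [Matrix.one_kronecker_one]
  | succ k ih => rw [pow_succ, pow_succ, pow_succ, ih, Matrix.mul_kronecker_mul]

lemma rank_zero_imp {n : Type*} [Fintype n] [DecidableEq n] (A : Matrix n n F)
    (h : A.rank = 0) : A = 0 := by
  have hbot : LinearMap.range A.mulVecLin = ⊥ := by
    rw [Matrix.rank] at h
    exact Submodule.finrank_eq_zero.mp h
  have h0 : A.mulVecLin = 0 := LinearMap.range_eq_bot.mp hbot
  ext i j
  rw [Matrix.zero_apply]
  have h1 : A.mulVec (Pi.single j 1) = 0 := by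
    have := congrArg (fun f => f (Pi.single j (1 : F))) h0
    simpa [Matrix.mulVecLin] using this
  have h2 := congrFun h1 i
  rw [Matrix.mulVec_single] at h2
  simpa using h2

end MatrixAux

section Main
variable {F : Type*} [Field F]

lemma sub_one_pow_apply {n' : Type*} [Fintype n'] [DecidableEq n'] (A : Matrix n' n' F)
    (s : ℕ) (P Q : n') :
    ((A - 1) ^ s) P Q
      = ∑ k ∈ Finset.range (s+1), (-1:F)^(s-k) * (s.choose k : F) * ((A ^ k) P Q) := by
  have hexp : (A - 1) ^ s
      = ∑ k ∈ Finset.range (s+1), ((-1:F)^(s-k) * (s.choose k : F)) • A ^ k := by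
    rw [sub_eq_add_neg, ((Commute.one_right A).neg_right).add_pow]
    refine Finset.sum_congr rfl fun k _ => ?_
    have h1 : (-1 : Matrix n' n' F) ^ (s - k) = ((-1:F)^(s-k)) • 1 := by
      rcases Nat.even_or_odd (s - k) with he | he
      · rw [he.neg_one_pow, he.neg_one_pow, one_smul]
      · rw [he.neg_one_pow, he.neg_one_pow, neg_smul, one_smul]
    have h2 : ((s.choose k : ℕ) : Matrix n' n' F) = ((s.choose k : F)) • 1 := by
      rw [Nat.cast_smul_eq_nsmul, nsmul_eq_mul, mul_one]
    rw [h1, h2, mul_smul_comm, mul_one, mul_smul_comm, mul_one, smul_smul]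
    rw [mul_comm ((s.choose k : F)) _]
  rw [hexp, Matrix.sum_apply]
  exact Finset.sum_congr rfl fun k _ => by rw [Matrix.smul_apply, smul_eq_mul, mul_assoc]

lemma stmt10_aux (F : Type*) [Field F] (p : ℕ) [CharP F p] (hp : p.Prime)
    (m r s : ℕ) (hm : p ^ (m - 1) < r) (hrs : r ≤ s)
    (hrank : ∀ k : ℕ, (((jordanBlock F r ⊗ₖ jordanBlock F s) - 1) ^ k).rank
      = ∑ _i : Fin r, (s - k)) :
    p ^ m ∣ s := by
  classical
  set M := jordanBlock F r ⊗ₖ jordanBlock F s with hMdef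
  have hppos : 0 < p ^ (m - 1) := pow_pos hp.pos _
  have hr2 : 2 ≤ r := by omega
  have hs2 : 2 ≤ s := le_trans hr2 hrs
  have hzero : ((M - 1) ^ s) = 0 := by
    apply rank_zero_imp
    rw [hrank s]
    simp
  refine dvd_pow_of_choose p hp m s fun j hj => ?_
  have haR : p ^ j < r := by
    calc p ^ j ≤ p ^ (m - 1) := Nat.pow_le_pow_right hp.pos (by omega)
    _ < r := hm
  set a := p ^ j with hadef
  have ha1 : 1 ≤ a := Nat.one_le_pow _ _ hp.pos
  have has : a < s := lt_of_lt_of_le haR hrs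
  set P : Fin r × Fin s := (⟨0, by omega⟩, ⟨a - 1, by omega⟩) with hP
  set Q : Fin r × Fin s := (⟨a, haR⟩, ⟨s - 1, by omega⟩) with hQ
  have hentry : ((M - 1) ^ s) P Q = 0 := by rw [hzero]; rfl
  rw [sub_one_pow_apply] at hentry
  have hMk : ∀ k, ((M ^ k) P Q) = (k.choose a : F) * (k.choose (s - a) : F) := by
    intro k
    rw [hMdef, kronecker_pow, Matrix.kroneckerMap_apply,
      jordanBlock_pow_apply _ _ _ _ (by simp [hP, hQ]),
      jordanBlock_pow_apply _ _ _ _ (by simp [hP, hQ]; omega)]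
    have e1 : (Q.1 : ℕ) - (P.1 : ℕ) = a := by simp [hP, hQ]
    have e2 : (Q.2 : ℕ) - (P.2 : ℕ) = s - a := by simp [hP, hQ]; omega
    rw [e1, e2]
  simp only [hMk] at hentry
  have hk := key_id a (s - a)
  rw [show a + (s - a) = s by omega] at hk
  have hcast : ((∑ k ∈ Finset.range (s+1),
        (-1:ℤ)^(s-k) * (s.choose k) * (k.choose a) * (k.choose (s-a)) : ℤ) : F)
      = ∑ k ∈ Finset.range (s+1), (-1:F)^(s-k) * (s.choose k : F)
          * ((k.choose a : F) * (k.choose (s - a) : F)) := by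
    push_cast
    exact Finset.sum_congr rfl fun k _ => by ring
  have hfin : ((s.choose a : ℕ) : F) = 0 := by
    have h9 := hcast.trans hentry
    rw [hk] at h9
    exact_mod_cast h9
  exact (CharP.cast_eq_zero_iff F p _).mp hfin

end Main

/-- If `p^{m-1} < r ≤ p^m ` and the Jordan partition of `J_r ⊗ J_s` is the
uniform partition `(s, …, s)`, then `p^m ∣ s`. -/
theorem stmt10 (F : Type*) [Field F] (p : ℕ) [CharP F p] (hp : p.Prime)
    (m r s : ℕ) (hm : p ^ (m - 1) < r) (hrpm : r ≤ p ^ m) (hrs : r ≤ s)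
    (huni : IsJordanSeq (jordanBlock F r ⊗ₖ jordanBlock F s) (fun _ : Fin r => s)) :
    p ^ m ∣ s := by
  obtain ⟨-, -, hrank⟩ := huni
  exact stmt10_aux F p hp m r s hm hrs hrank
end

section
/- Let D be a principal ideal domain, \u03b1 \u2208 D prime, and D\u0304 = D/(\u03b1^n). Let M be a free D\u0304-module with basis e_1, \u2026, e_r, let 1 \u2264 j \u2264 r, and let N = \u2295_{i=1}^{j} x_i D\u0304 be a submodule of M with Ann(x_i) = (\u03b1^{n_i})/(\u03b1^n) \u2260 D\u0304 for each i. Then M/N \u2245 \u2295_{i=1}^{r} D/(\u03b1^{n-n_i}), where n_i = 0 for j < i \u2264 r. -/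
open DirectSum

set_option maxHeartbeats 1000000

private lemma sumExtend_inl {K V ι : Type*} [Field K] [AddCommGroup V] [Module K V] (v : ι → V)
    (hs : LinearIndependent K v) (i : ι) : Module.Basis.sumExtend hs (Sum.inl i) = v i := by
  simp only [Module.Basis.sumExtend, Module.Basis.reindex_apply, Equiv.symm_symm, Trans.trans, Equiv.trans_apply,
    Equiv.sumCongr, Equiv.coe_fn_mk, Sum.map_inl, Equiv.Set.sumDiffSubset_apply_inl,
    Module.Basis.coe_extend, Set.coe_inclusion, Equiv.ofInjective_apply]
  rfl

/-- Lifting units along `D ⧸ (α^n) → D ⧸ (α)`. -/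
private lemma aux_unit {D : Type*} [CommRing D] (α : D) (n : ℕ) (u : D)
    (h : IsUnit (Ideal.Quotient.mk (Ideal.span {α}) u)) :
    IsUnit (Ideal.Quotient.mk (Ideal.span {α ^ n}) u) := by
  obtain ⟨b, hb⟩ : ∃ b, Ideal.Quotient.mk (Ideal.span {α}) u *
      Ideal.Quotient.mk (Ideal.span {α}) b = 1 := by
    obtain ⟨w, hw⟩ := h.exists_right_inv
    obtain ⟨b, rfl⟩ := Ideal.Quotient.mk_surjective w
    exact ⟨b, hw⟩
  have hmem : u * b - 1 ∈ Ideal.span ({α} : Set D) := by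
    rw [← Ideal.Quotient.eq]
    simpa using hb
  obtain ⟨c, hc⟩ := Ideal.mem_span_singleton'.mp hmem
  -- u * b = 1 - (-(c*α))
  have hub : u * b = 1 - (-(c * α)) := by ring_nf; linear_combination -hc
  have hgeom : (∑ i ∈ Finset.range n, (-(c * α)) ^ i) * ((-(c * α)) - 1) =
      (-(c * α)) ^ n - 1 := geom_sum_mul _ n
  have key : u * (b * (∑ i ∈ Finset.range n, (-(c * α)) ^ i)) = 1 - (-(c * α)) ^ n := by
    have := hgeom
    calc u * (b * (∑ i ∈ Finset.range n, (-(c * α)) ^ i))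
        = (u * b) * (∑ i ∈ Finset.range n, (-(c * α)) ^ i) := by ring
      _ = (1 - (-(c * α))) * (∑ i ∈ Finset.range n, (-(c * α)) ^ i) := by rw [hub]
      _ = 1 - (-(c * α)) ^ n := by linear_combination -hgeom
  refine IsUnit.of_mul_eq_one (Ideal.Quotient.mk _ (b * (∑ i ∈ Finset.range n, (-(c * α)) ^ i)))
    ?_
  rw [← map_mul, key, map_sub, map_one]
  have hmem2 : ((-(c * α)) ^ n : D) ∈ Ideal.span ({α ^ n} : Set D) := by
    rw [Ideal.mem_span_singleton, show (-(c * α) : D) = (-c) * α by ring, mul_pow]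
    exact ⟨(-c) ^ n, by ring⟩
  rw [Ideal.Quotient.eq_zero_iff_mem.mpr hmem2, sub_zero]

private lemma aux_div {D : Type*} [CommRing D] [IsDomain D] {α : D} (hα0 : α ≠ 0)
    {n s : ℕ} (hs : s ≤ n) (c : D ⧸ Ideal.span {α ^ n})
    (h : Ideal.Quotient.mk (Ideal.span {α ^ n}) (α ^ s) * c = 0) :
    ∃ u, c = Ideal.Quotient.mk (Ideal.span {α ^ n}) (α ^ (n - s)) * u := by
  obtain ⟨c', rfl⟩ := Ideal.Quotient.mk_surjective c
  rw [← map_mul, Ideal.Quotient.eq_zero_iff_mem, Ideal.mem_span_singleton'] at h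
  obtain ⟨w, hw⟩ := h
  refine ⟨Ideal.Quotient.mk _ w, ?_⟩
  rw [← map_mul]
  congr 1
  have hfac : (α : D) ^ n = α ^ s * α ^ (n - s) := by
    rw [← pow_add]; congr 1; omega
  apply mul_left_cancel₀ (pow_ne_zero s hα0)
  rw [← hw, hfac]; ring


private lemma aux_basis {D : Type*} [CommRing D] [IsDomain D] [IsPrincipalIdealRing D]
    (α : D) (hα : Prime α) (n : ℕ)
    (M : Type*) [AddCommGroup M] [Module (D ⧸ Ideal.span {α ^ n}) M]
    (r j : ℕ) (hj1 : 1 ≤ j) (hjr : j ≤ r)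
    (e : Module.Basis (Fin r) (D ⧸ Ideal.span {α ^ n}) M)
    (x : Fin j → M) (ni : Fin j → ℕ) (hni : ∀ i, ni i ≤ n)
    (hind : iSupIndep fun i : Fin j => Submodule.span (D ⧸ Ideal.span {α ^ n}) {x i})
    (hann : ∀ i : Fin j, (Submodule.span (D ⧸ Ideal.span {α ^ n}) {x i}).annihilator =
        Ideal.span {Ideal.Quotient.mk (Ideal.span {α ^ n}) (α ^ ni i)})
    (hne : ∀ i : Fin j, (Submodule.span (D ⧸ Ideal.span {α ^ n}) {x i}).annihilator ≠ ⊤) :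
    ∃ F : Module.Basis (Fin r) (D ⧸ Ideal.span {α ^ n}) M, ∀ i : Fin j,
      x i = Ideal.Quotient.mk (Ideal.span {α ^ n}) (α ^ (n - ni i)) • F (Fin.castLE hjr i) := by
  classical
  set mk0 : D →+* D ⧸ Ideal.span {α ^ n} := Ideal.Quotient.mk (Ideal.span {α ^ n}) with hmk0
  -- basic numerology
  have hx0 : ∀ i, mk0 (α ^ ni i) • x i = 0 := by
    intro i
    have : mk0 (α ^ ni i) ∈ (Submodule.span (D ⧸ Ideal.span {α ^ n}) {x i}).annihilator := by
      rw [hann i]; exact Ideal.subset_span rfl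
    exact (Submodule.mem_annihilator_span_singleton _ _).mp this
  have hn1 : ∀ i, 1 ≤ ni i := by
    intro i
    by_contra h
    have h0 : ni i = 0 := by omega
    apply hne i
    rw [hann i, h0, pow_zero, map_one, Ideal.span_singleton_one]
  have hn : 1 ≤ n := le_trans (hn1 ⟨0, hj1⟩) (hni ⟨0, hj1⟩)
  -- coordinates of the x i divide
  have hdiv : ∀ (i : Fin j) (kk : Fin r), ∃ u, e.equivFun (x i) kk = mk0 (α ^ (n - ni i)) * u := by
    intro i kk
    apply aux_div hα.ne_zero (hni i)
    have h1 : e.equivFun (mk0 (α ^ ni i) • x i) = 0 := by rw [hx0 i]; simp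
    have h2 : mk0 (α ^ ni i) * e.equivFun (x i) kk = 0 := by
      rw [map_smul] at h1
      have := congrFun h1 kk
      simpa [smul_eq_mul] using this
    exact h2
  choose u hu using hdiv
  set y : Fin j → M := fun i => e.equivFun.symm (u i) with hy
  have hrepr_y : ∀ i, e.equivFun (y i) = u i := by
    intro i; simp only [hy]; exact e.equivFun.apply_symm_apply _
  have hxy : ∀ i, x i = mk0 (α ^ (n - ni i)) • y i := by
    intro i
    apply e.equivFun.injective
    funext kk
    rw [hu i kk, map_smul]
    simp [hrepr_y i, smul_eq_mul]
  -- the residue field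
  haveI hmax : (Ideal.span ({α} : Set D)).IsMaximal :=
    PrincipalIdealRing.isMaximal_of_irreducible hα.irreducible
  letI : Field (D ⧸ Ideal.span ({α} : Set D)) := Ideal.Quotient.field _
  have hle : Ideal.span ({α ^ n} : Set D) ≤ Ideal.span ({α} : Set D) := by
    rw [Ideal.span_singleton_le_span_singleton]
    exact dvd_pow_self α (by omega)
  set red : (D ⧸ Ideal.span {α ^ n}) →+* (D ⧸ Ideal.span ({α} : Set D)) :=
    Ideal.Quotient.factor hle with hred
  set ybar : Fin j → (Fin r → D ⧸ Ideal.span ({α} : Set D)) :=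
    fun i kk => red (u i kk) with hybar
  -- linear independence of the reductions
  have hli : LinearIndependent (D ⧸ Ideal.span ({α} : Set D)) ybar := by
    rw [Fintype.linearIndependent_iff]
    intro g hg i0
    choose b hb using fun i => Ideal.Quotient.mk_surjective (g i)
    choose u' hu' using fun (i : Fin j) (kk : Fin r) => Ideal.Quotient.mk_surjective (u i kk)
    -- coordinatewise sums lie in (α)
    have hSmem : ∀ kk : Fin r, (∑ i, b i * u' i kk) ∈ Ideal.span ({α} : Set D) := by
      intro kk
      rw [← Ideal.Quotient.eq_zero_iff_mem, map_sum]
      have h1 := congrFun hg kk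
      rw [Finset.sum_apply, Pi.zero_apply] at h1
      rw [← h1]
      apply Finset.sum_congr rfl
      intro i _
      rw [map_mul, hb i]
      have h2 : Ideal.Quotient.mk (Ideal.span ({α} : Set D)) (u' i kk) = ybar i kk := by
        rw [hybar]
        show Ideal.Quotient.mk (Ideal.span ({α} : Set D)) (u' i kk) = red (u i kk)
        rw [← hu' i kk, hred]
        exact (Ideal.Quotient.factor_mk hle _).symm
      rw [h2, Pi.smul_apply, smul_eq_mul]
    choose c hc using fun kk => Ideal.mem_span_singleton'.mp (hSmem kk)
    -- key identity in M
    have hsum : (∑ i, mk0 (b i) • y i) = mk0 α • e.equivFun.symm (fun kk => mk0 (c kk)) := by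
      apply e.equivFun.injective
      rw [map_sum, map_smul]
      funext kk
      rw [Finset.sum_apply, Pi.smul_apply, e.equivFun.apply_symm_apply, smul_eq_mul, ← map_mul]
      have h3 : α * c kk = ∑ i, b i * u' i kk := by rw [mul_comm]; exact hc kk
      rw [h3, map_sum]
      apply Finset.sum_congr rfl
      intro i _
      rw [map_smul, Pi.smul_apply, hrepr_y i, smul_eq_mul, map_mul, hu' i kk]
    -- multiply by α^(n-1)
    have hzero : (∑ i, (mk0 (b i * α ^ (ni i - 1))) • x i) = 0 := by
      have h2 : mk0 (α ^ (n - 1)) • (∑ i, mk0 (b i) • y i) = 0 := by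
        rw [hsum, smul_smul, ← map_mul]
        have h3 : (α ^ (n - 1) * α : D) = α ^ n := by rw [← pow_succ]; congr 1; omega
        rw [h3, show mk0 (α ^ n) = 0 from Ideal.Quotient.eq_zero_iff_mem.mpr
          (Ideal.subset_span rfl), zero_smul]
      rw [Finset.smul_sum] at h2
      rw [← h2]
      apply Finset.sum_congr rfl
      intro i _
      rw [hxy i, smul_smul, smul_smul, ← map_mul, ← map_mul]
      congr 2
      rw [mul_assoc, ← pow_add, show ni i - 1 + (n - ni i) = n - 1 by
        have := hn1 i; have := hni i; omega]
      ring
    -- the i0 term vanishes by independence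
    have hvan : (mk0 (b i0 * α ^ (ni i0 - 1))) • x i0 = 0 := by
      have hmem1 : (mk0 (b i0 * α ^ (ni i0 - 1))) • x i0 ∈
          Submodule.span (D ⧸ Ideal.span {α ^ n}) {x i0} :=
        Submodule.smul_mem _ _ (Submodule.mem_span_singleton_self _)
      have hmem2 : (mk0 (b i0 * α ^ (ni i0 - 1))) • x i0 ∈
          ⨆ i, ⨆ (_ : i ≠ i0), Submodule.span (D ⧸ Ideal.span {α ^ n}) {x i} := by
        have heq : (mk0 (b i0 * α ^ (ni i0 - 1))) • x i0 =
            - ∑ i ∈ Finset.univ.erase i0, (mk0 (b i * α ^ (ni i - 1))) • x i := by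
          have h4 := hzero
          rw [← Finset.add_sum_erase _ _ (Finset.mem_univ i0)] at h4
          exact eq_neg_of_add_eq_zero_left h4
        rw [heq]
        apply neg_mem
        apply Submodule.sum_mem
        intro i hi
        exact Submodule.mem_iSup_of_mem i (Submodule.mem_iSup_of_mem
          (Finset.ne_of_mem_erase hi)
          (Submodule.smul_mem _ _ (Submodule.mem_span_singleton_self _)))
      exact (Submodule.disjoint_def.mp (hind i0)) _ hmem1 hmem2
    -- conclude g i0 = 0
    have hmem : mk0 (b i0 * α ^ (ni i0 - 1)) ∈ Ideal.span {mk0 (α ^ ni i0)} := by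
      rw [← hann i0]
      exact (Submodule.mem_annihilator_span_singleton _ _).mpr hvan
    obtain ⟨t, ht⟩ := Ideal.mem_span_singleton'.mp hmem
    obtain ⟨t', rfl⟩ := Ideal.Quotient.mk_surjective t
    have hmem3 : t' * α ^ ni i0 - b i0 * α ^ (ni i0 - 1) ∈ Ideal.span ({α ^ n} : Set D) := by
      rw [← Ideal.Quotient.eq]
      rw [← map_mul] at ht
      exact ht
    obtain ⟨w, hw⟩ := Ideal.mem_span_singleton'.mp hmem3
    have hfin : b i0 = α * (t' - w * α ^ (n - ni i0)) := by
      apply mul_left_cancel₀ (pow_ne_zero (ni i0 - 1) hα.ne_zero)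
      have hs1 := hn1 i0
      have hs2 := hni i0
      have e1 : α ^ (ni i0 - 1) * α = α ^ ni i0 := by rw [← pow_succ]; congr 1; omega
      have e2 : α ^ (ni i0 - 1) * (α * α ^ (n - ni i0)) = α ^ n := by
        rw [← mul_assoc, e1, ← pow_add]; congr 1; omega
      calc α ^ (ni i0 - 1) * b i0 = t' * α ^ ni i0 - w * α ^ n := by linear_combination hw
        _ = α ^ (ni i0 - 1) * (α * (t' - w * α ^ (n - ni i0))) := by
            linear_combination (-t') * e1 + w * e2
    rw [← hb i0, Ideal.Quotient.eq_zero_iff_mem, hfin]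
    exact Ideal.mem_span_singleton'.mpr ⟨t' - w * α ^ (n - ni i0), mul_comm _ _⟩
  -- extend to a basis of the coordinate space
  obtain ⟨bV, hbV⟩ : ∃ bV : Module.Basis (Fin r) (D ⧸ Ideal.span ({α} : Set D))
      (Fin r → D ⧸ Ideal.span ({α} : Set D)), ∀ i : Fin j, bV (Fin.castLE hjr i) = ybar i := by
    let b0 : Module.Basis (Fin j ⊕ Module.Basis.sumExtendIndex hli) (D ⧸ Ideal.span ({α} : Set D))
        (Fin r → D ⧸ Ideal.span ({α} : Set D)) := Module.Basis.sumExtend hli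
    have hb0 : ∀ i : Fin j, b0 (Sum.inl i) = ybar i := fun i => sumExtend_inl ybar hli i
    haveI hfin : Finite (Fin j ⊕ Module.Basis.sumExtendIndex hli) := Module.Finite.finite_basis b0
    haveI : Fintype (Module.Basis.sumExtendIndex hli) :=
      @Fintype.ofFinite _ (Finite.of_injective
        (Sum.inr : Module.Basis.sumExtendIndex hli → Fin j ⊕ Module.Basis.sumExtendIndex hli)
        Sum.inr_injective)
    have hcard : j + Fintype.card (Module.Basis.sumExtendIndex hli) = r := by
      have h1 := Module.finrank_eq_card_basis b0
      rw [Module.finrank_fintype_fun_eq_card, Fintype.card_fin] at h1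
      rw [Fintype.card_sum, Fintype.card_fin] at h1
      omega
    let ρ : Fin (r - j) ≃ (Module.Basis.sumExtendIndex hli) :=
      Fintype.equivOfCardEq (by rw [Fintype.card_fin]; omega)
    let τ : Fin r ≃ (Fin j ⊕ Module.Basis.sumExtendIndex hli) :=
      (finCongr (by omega : r = j + (r - j))).trans
        (finSumFinEquiv.symm.trans (Equiv.sumCongr (Equiv.refl (Fin j)) ρ))
    have hτ : ∀ i : Fin j, τ (Fin.castLE hjr i) = Sum.inl i := by
      intro i
      simp only [τ, Equiv.trans_apply]
      have h1 : (finCongr (by omega : r = j + (r - j))) (Fin.castLE hjr i) =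
          Fin.castAdd (r - j) i := by ext; rfl
      rw [h1, finSumFinEquiv_symm_apply_castAdd]
      rfl
    refine ⟨b0.reindex τ.symm, fun i => ?_⟩
    rw [Module.Basis.reindex_apply, Equiv.symm_symm, hτ i]
    exact hb0 i
  -- lift the new basis vectors
  have hredsurj : Function.Surjective red := by
    intro z
    obtain ⟨a, rfl⟩ := Ideal.Quotient.mk_surjective z
    exact ⟨mk0 a, Ideal.Quotient.factor_mk hle a⟩
  choose ℓ hℓ using fun (t : Fin r) (kk : Fin r) => hredsurj (bV t kk)
  set G : Fin r → M := fun t =>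
    if h : t.1 < j then y ⟨t.1, h⟩ else e.equivFun.symm (ℓ t) with hG
  set B : Matrix (Fin r) (Fin r) (D ⧸ Ideal.span {α ^ n}) := e.toMatrix G with hB
  have hmapB : red.mapMatrix B = (Pi.basisFun (D ⧸ Ideal.span ({α} : Set D)) (Fin r)).toMatrix bV := by
    ext kk t
    rw [RingHom.mapMatrix_apply, Matrix.map_apply, Module.Basis.toMatrix_apply, Pi.basisFun_repr,
      hB, Module.Basis.toMatrix_apply]
    by_cases h : t.1 < j
    · have hGt : G t = y ⟨t.1, h⟩ := by rw [hG]; exact dif_pos h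
      have h2 : e.repr (y ⟨t.1, h⟩) kk = u ⟨t.1, h⟩ kk := by
        rw [← Module.Basis.equivFun_apply, hrepr_y]
      have h3 : bV t = ybar ⟨t.1, h⟩ := by
        have ht : t = Fin.castLE hjr ⟨t.1, h⟩ := by ext; rfl
        have h4 := hbV ⟨t.1, h⟩
        rw [← ht] at h4
        exact h4
      rw [hGt, h2, h3]
    · have hGt : G t = e.equivFun.symm (ℓ t) := by rw [hG]; exact dif_neg h
      have h2 : e.repr (e.equivFun.symm (ℓ t)) kk = ℓ t kk := by
        rw [← Module.Basis.equivFun_apply, e.equivFun.apply_symm_apply]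
      rw [hGt, h2, hℓ]
  have hdet : IsUnit B.det := by
    have h1 : IsUnit (red B.det) := by
      rw [red.map_det, hmapB]
      haveI := (Pi.basisFun (D ⧸ Ideal.span ({α} : Set D)) (Fin r)).invertibleToMatrix bV
      exact Matrix.isUnit_det_of_invertible _
    obtain ⟨d, hd⟩ := Ideal.Quotient.mk_surjective B.det
    rw [← hd] at h1 ⊢
    have : red (mk0 d) = Ideal.Quotient.mk (Ideal.span ({α} : Set D)) d :=
      Ideal.Quotient.factor_mk hle d
    rw [this] at h1
    exact aux_unit α n d h1
  set F : Module.Basis (Fin r) (D ⧸ Ideal.span {α ^ n}) M := e.map (Matrix.toLinearEquiv e B hdet)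
    with hF
  have hFG : ∀ t, F t = G t := by
    intro t
    rw [hF, Module.Basis.map_apply, Matrix.toLinearEquiv_apply, Matrix.toLin_self]
    simp only [hB, Module.Basis.toMatrix_apply]
    exact e.sum_repr (G t)
  refine ⟨F, fun i => ?_⟩
  have h1 : F (Fin.castLE hjr i) = y i := by
    rw [hFG, hG]
    simp only [Fin.coe_castLE, i.isLt, dif_pos]
  rw [h1]
  exact hxy i

/-- Let `D` be a PID, `α ∈ D` prime, `D̄ = D/(α^n)`, `M` a free `D̄`-module with
basis `e₁, …, e_r`, and `N = ⊕_{i=1}^{j} x_i D̄` a submodule with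
`Ann(x_i) = (α^{n_i})/(α^n) ≠ D̄`.  Then
`M/N ≅ ⊕_{i=1}^{r} D/(α^{n-n_i})` (with `n_i = 0` for `j < i ≤ r`). -/
theorem stmt12 (D : Type*) [CommRing D] [IsDomain D] [IsPrincipalIdealRing D]
    (α : D) (hα : Prime α) (n : ℕ)
    (M : Type*) [AddCommGroup M] [Module (D ⧸ Ideal.span {α ^ n}) M]
    (r j : ℕ) (hj1 : 1 ≤ j) (hjr : j ≤ r)
    (e : Module.Basis (Fin r) (D ⧸ Ideal.span {α ^ n}) M)
    (x : Fin j → M) (ni : Fin j → ℕ) (hni : ∀ i, ni i ≤ n)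
    (hind : iSupIndep fun i : Fin j =>
      Submodule.span (D ⧸ Ideal.span {α ^ n}) {x i})
    (hann : ∀ i : Fin j,
      (Submodule.span (D ⧸ Ideal.span {α ^ n}) {x i}).annihilator =
        Ideal.span {Ideal.Quotient.mk (Ideal.span {α ^ n}) (α ^ ni i)})
    (hne : ∀ i : Fin j,
      (Submodule.span (D ⧸ Ideal.span {α ^ n}) {x i}).annihilator ≠ ⊤)
    (N : Submodule (D ⧸ Ideal.span {α ^ n}) M)
    (hN : N = ⨆ i : Fin j, Submodule.span (D ⧸ Ideal.span {α ^ n}) {x i}) :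
    letI : Module D (M ⧸ N) :=
      Module.compHom (M ⧸ N) (algebraMap D (D ⧸ Ideal.span {α ^ n}))
    Nonempty ((M ⧸ N) ≃ₗ[D]
      ⨁ i : Fin r, D ⧸ (Ideal.span
        {α ^ (n - (if h : (i : ℕ) < j then ni ⟨(i : ℕ), h⟩ else 0))} : Ideal D)) := by
  classical
  obtain ⟨F, hF⟩ := aux_basis α hα n M r j hj1 hjr e x ni hni hind hann hne
  set mk0 : D →+* D ⧸ Ideal.span {α ^ n} := Ideal.Quotient.mk (Ideal.span {α ^ n}) with hmk0
  set m : Fin r → ℕ := fun i => n - (if h : (i : ℕ) < j then ni ⟨(i : ℕ), h⟩ else 0) with hm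
  set I : Fin r → Ideal D := fun i => Ideal.span {α ^ m i} with hI
  have hle : ∀ i, Ideal.span ({α ^ n} : Set D) ≤ I i := by
    intro i
    rw [hI]
    show Ideal.span {α ^ n} ≤ Ideal.span {α ^ m i}
    rw [Ideal.span_singleton_le_span_singleton]
    exact pow_dvd_pow α (Nat.sub_le _ _)
  set P : Fin r → Ideal (D ⧸ Ideal.span {α ^ n}) := fun i => (I i).map mk0 with hP
  have hPspan : ∀ i, P i = Ideal.span {mk0 (α ^ m i)} := by
    intro i
    rw [hP, hI]
    show Ideal.map mk0 (Ideal.span {α ^ m i}) = Ideal.span {mk0 (α ^ m i)}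
    rw [Ideal.map_span, Set.image_singleton]
  have hPbot : ∀ t : Fin r, ¬ (t : ℕ) < j → P t = ⊥ := by
    intro t ht
    rw [hPspan]
    have h1 : m t = n := by simp [hm, ht]
    rw [h1, show mk0 (α ^ n) = 0 from Ideal.Quotient.eq_zero_iff_mem.mpr
      (Ideal.subset_span rfl)]
    exact Ideal.span_singleton_eq_bot.mpr rfl
  have hxF : ∀ i : Fin j, x i = mk0 (α ^ m (Fin.castLE hjr i)) • F (Fin.castLE hjr i) := by
    intro i
    have hmi : m (Fin.castLE hjr i) = n - ni i := by
      simp only [hm, Fin.coe_castLE, i.isLt, dif_pos]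
    rw [hmi]
    exact hF i
  have hcoord : ∀ i : Fin j, F.equivFun (x i) =
      Pi.single (Fin.castLE hjr i) (mk0 (α ^ m (Fin.castLE hjr i))) := by
    intro i
    rw [hxF i, map_smul]
    funext s
    rw [Pi.smul_apply, Module.Basis.equivFun_self, smul_eq_mul, Pi.single_apply]
    by_cases h : Fin.castLE hjr i = s
    · rw [if_pos h, if_pos h.symm, mul_one]
    · rw [if_neg h, if_neg (fun hh => h hh.symm), mul_zero]
  have hmap : N.map (F.equivFun : M →ₗ[D ⧸ Ideal.span {α ^ n}]
      (Fin r → D ⧸ Ideal.span {α ^ n})) =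
      Submodule.pi Set.univ
        (fun i => (P i : Submodule (D ⧸ Ideal.span {α ^ n}) (D ⧸ Ideal.span {α ^ n}))) := by
    apply le_antisymm
    · rw [hN, Submodule.map_iSup]
      apply iSup_le
      intro i
      rw [Submodule.map_span, Set.image_singleton, Submodule.span_le,
        Set.singleton_subset_iff]
      show F.equivFun (x i) ∈ Submodule.pi Set.univ
        (fun i => (P i : Submodule (D ⧸ Ideal.span {α ^ n}) (D ⧸ Ideal.span {α ^ n})))
      rw [Submodule.mem_pi]
      intro s _
      rw [hcoord i, Pi.single_apply]
      by_cases h : s = Fin.castLE hjr i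
      · rw [if_pos h, h, hPspan]
        exact Ideal.subset_span rfl
      · rw [if_neg h]
        exact Submodule.zero_mem _
    · intro v hv
      rw [Submodule.mem_pi] at hv
      have hvj : ∀ i : Fin j, ∃ c, v (Fin.castLE hjr i) =
          c * mk0 (α ^ m (Fin.castLE hjr i)) := by
        intro i
        have h5 := hv (Fin.castLE hjr i) (Set.mem_univ _)
        rw [hPspan] at h5
        obtain ⟨c, hc⟩ := Ideal.mem_span_singleton'.mp h5
        exact ⟨c, hc.symm⟩
      choose c hc using hvj
      have hv0 : ∀ t : Fin r, ¬ (t : ℕ) < j → v t = 0 := by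
        intro t ht
        have h5 := hv t (Set.mem_univ _)
        rw [hPbot t ht] at h5
        simpa using h5
      refine ⟨∑ i : Fin j, c i • x i, ?_, ?_⟩
      · rw [hN]
        apply Submodule.sum_mem
        intro i _
        exact Submodule.mem_iSup_of_mem i
          (Submodule.smul_mem _ _ (Submodule.mem_span_singleton_self _))
      · rw [map_sum]
        funext t
        rw [Finset.sum_apply]
        have hterm : ∀ i : Fin j, (F.equivFun (c i • x i)) t =
            (Pi.single (Fin.castLE hjr i) (c i * mk0 (α ^ m (Fin.castLE hjr i))) :
              Fin r → D ⧸ Ideal.span {α ^ n}) t := by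
          intro i
          rw [map_smul, hcoord i, Pi.smul_apply, Pi.single_apply, Pi.single_apply,
            smul_eq_mul]
          by_cases h : t = Fin.castLE hjr i
          · rw [if_pos h, if_pos h]
          · rw [if_neg h, if_neg h, mul_zero]
        simp only [LinearEquiv.coe_coe]
        simp only [hterm]
        by_cases h : (t : ℕ) < j
        · rw [Finset.sum_eq_single ⟨(t : ℕ), h⟩]
          · have ht : Fin.castLE hjr ⟨(t : ℕ), h⟩ = t := by ext; rfl
            rw [ht, Pi.single_eq_same]
            have hc' := hc ⟨(t : ℕ), h⟩
            rw [ht] at hc'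
            exact hc'.symm
          · intro i _ hne'
            apply Pi.single_eq_of_ne
            intro hh
            apply hne'
            ext
            have := congrArg (fun z : Fin r => (z : ℕ)) hh
            simpa using this.symm
          · intro hh
            exact absurd (Finset.mem_univ _) hh
        · rw [hv0 t h]
          apply Finset.sum_eq_zero
          intro i _
          apply Pi.single_eq_of_ne
          intro hh
          apply h
          rw [hh, Fin.coe_castLE]
          exact i.isLt
    
  let Eq1 : (M ⧸ N) ≃ₗ[D ⧸ Ideal.span {α ^ n}]
      ((Fin r → D ⧸ Ideal.span {α ^ n}) ⧸ Submodule.pi Set.univ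
        (fun i => (P i : Submodule (D ⧸ Ideal.span {α ^ n}) (D ⧸ Ideal.span {α ^ n})))) :=
    Submodule.Quotient.equiv N _ F.equivFun hmap
  let Eq2 := Submodule.quotientPi
    (fun i => (P i : Submodule (D ⧸ Ideal.span {α ^ n}) (D ⧸ Ideal.span {α ^ n})))
  let φ : ∀ i : Fin r,
      ((D ⧸ Ideal.span {α ^ n}) ⧸
        (P i : Submodule (D ⧸ Ideal.span {α ^ n}) (D ⧸ Ideal.span {α ^ n}))) ≃+* (D ⧸ I i) :=
    fun i => DoubleQuot.quotQuotEquivQuotOfLE (hle i)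
  letI : Module D (M ⧸ N) :=
    Module.compHom (M ⧸ N) (algebraMap D (D ⧸ Ideal.span {α ^ n}))
  let A : (M ⧸ N) ≃+ (⨁ i : Fin r, D ⧸ I i) :=
    Eq1.toAddEquiv.trans (Eq2.toAddEquiv.trans
      ((AddEquiv.piCongrRight fun i => (φ i).toAddEquiv).trans
        (DirectSum.linearEquivFunOnFintype D (Fin r) (fun i => D ⧸ I i)).symm.toAddEquiv))
  have hφsmul : ∀ (i : Fin r) (c : D)
      (w : (D ⧸ Ideal.span {α ^ n}) ⧸
        (P i : Submodule (D ⧸ Ideal.span {α ^ n}) (D ⧸ Ideal.span {α ^ n}))),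
      φ i ((mk0 c) • w) = c • φ i w := by
    intro i c w
    obtain ⟨w', rfl⟩ := Submodule.Quotient.mk_surjective _ w
    have h1 : (mk0 c) • (Submodule.Quotient.mk w' :
        (D ⧸ Ideal.span {α ^ n}) ⧸
          (P i : Submodule (D ⧸ Ideal.span {α ^ n}) (D ⧸ Ideal.span {α ^ n}))) =
        Submodule.Quotient.mk (mk0 c * w') := by
      rw [← Submodule.Quotient.mk_smul]
      rfl
    rw [h1]
    have h2 : ∀ a : D ⧸ Ideal.span {α ^ n},
        (Submodule.Quotient.mk a : (D ⧸ Ideal.span {α ^ n}) ⧸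
          (P i : Submodule (D ⧸ Ideal.span {α ^ n}) (D ⧸ Ideal.span {α ^ n}))) =
        Ideal.Quotient.mk (P i) a := fun _ => rfl
    rw [h2, h2, map_mul, map_mul (φ i)]
    have h3 : φ i (Ideal.Quotient.mk (P i) (mk0 c)) = Ideal.Quotient.mk (I i) c :=
      DoubleQuot.quotQuotEquivQuotOfLE_quotQuotMk c (hle i)
    rw [h3]
    obtain ⟨v, hv⟩ := Ideal.Quotient.mk_surjective (φ i (Ideal.Quotient.mk (P i) w'))
    rw [← hv]
    have h4 : c • (Ideal.Quotient.mk (I i) v) = Ideal.Quotient.mk (I i) (c * v) := by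
      show c • (Submodule.Quotient.mk v : D ⧸ (I i : Submodule D D)) = _
      rw [← Submodule.Quotient.mk_smul]
      rfl
    rw [h4, ← map_mul]
  have hsmul : ∀ (c : D) (q : M ⧸ N), A (c • q) = c • A q := by
    intro c q
    have h0 : c • q = (mk0 c) • q := rfl
    rw [h0]
    show (DirectSum.linearEquivFunOnFintype D (Fin r) (fun i => D ⧸ I i)).symm
        ((AddEquiv.piCongrRight fun i => (φ i).toAddEquiv) (Eq2 (Eq1 ((mk0 c) • q)))) = _
    rw [map_smul, map_smul]
    have h1 : (AddEquiv.piCongrRight fun i => (φ i).toAddEquiv)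
        ((mk0 c) • (Eq2 (Eq1 q))) = c • ((AddEquiv.piCongrRight fun i => (φ i).toAddEquiv)
        (Eq2 (Eq1 q))) := by
      funext i
      have hl : (AddEquiv.piCongrRight fun i => (φ i).toAddEquiv) ((mk0 c) • (Eq2 (Eq1 q))) i
          = φ i ((mk0 c) • (Eq2 (Eq1 q) i)) := rfl
      have hr : (c • ((AddEquiv.piCongrRight fun i => (φ i).toAddEquiv) (Eq2 (Eq1 q)))) i
          = c • (φ i (Eq2 (Eq1 q) i)) := rfl
      rw [hl, hr, hφsmul]
    rw [h1, map_smul]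
    rfl
  exact ⟨AddEquiv.toLinearEquiv A hsmul⟩
end

section
/- [Periodicity] Let char F = p > 0 and r \u2264 min{s, s', p^m}. If s \u2261 s' (mod p^m), then the deviation vectors coincide: \u03b5(r,s,p) = \u03b5(r,s',p), where \u03b5(r,s,p) = (\u03bb_1 - s, \u2026, \u03bb_r - s) and \u03bb(r,s,p) = (\u03bb_1, \u2026, \u03bb_r) is the Jordan partition of J_r \u2297 J_s. -/
open Matrix Kronecker

namespace Stmt13Aux

variable {F : Type*} [Field F]

/-- The nilpotent shift matrix. -/
def shiftM (F : Type*) [Zero F] [One F] (k : ℕ) : Matrix (Fin k) (Fin k) F :=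
  Matrix.of fun i j => if (j : ℕ) = (i : ℕ) + 1 then 1 else 0

lemma jordanBlock_apply (k : ℕ) (i j : Fin k) :
    jordanBlock F k i j
      = if (j : ℕ) = (i : ℕ) then 1 else if (j : ℕ) = (i : ℕ) + 1 then 1 else 0 := by
  simp only [jordanBlock, Matrix.of_apply, Fin.ext_iff]

lemma jordan_eq_one_add (k : ℕ) : jordanBlock F k = 1 + shiftM F k := by
  ext i j
  rw [jordanBlock_apply]
  simp only [shiftM, Matrix.add_apply, Matrix.one_apply, Matrix.of_apply, Fin.ext_iff]
  split_ifs <;> first | (exfalso; omega) | ring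

lemma sum_delta_mul {n : ℕ} (a : ℕ) (f : Fin n → F) :
    ∑ j : Fin n, (if (j : ℕ) = a then 1 else 0) * f j
      = if h : a < n then f ⟨a, h⟩ else 0 := by
  split_ifs with h
  · rw [Finset.sum_eq_single (⟨a, h⟩ : Fin n)]
    · simp
    · intro b _ hb
      rw [if_neg, zero_mul]
      simpa [Fin.ext_iff] using hb
    · simp
  · apply Finset.sum_eq_zero
    intro b _
    rw [if_neg (by omega), zero_mul]

lemma sum_mul_delta {n : ℕ} (a : ℕ) (f : Fin n → F) :
    ∑ j : Fin n, f j * (if (j : ℕ) = a then 1 else 0)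
      = if h : a < n then f ⟨a, h⟩ else 0 := by
  rw [← sum_delta_mul a f]
  exact Finset.sum_congr rfl fun j _ => mul_comm _ _

lemma shiftM_pow (k e : ℕ) : (shiftM F k) ^ e =
    Matrix.of (fun (i j : Fin k) => if (j : ℕ) = (i : ℕ) + e then 1 else 0) := by
  induction e with
  | zero =>
    ext i j
    simp [Matrix.one_apply, Fin.ext_iff, eq_comm]
  | succ e ih =>
    rw [pow_succ, ih]
    ext i j
    rw [Matrix.mul_apply]
    simp only [Matrix.of_apply, shiftM]
    have step : ∀ l : Fin k, (if (l : ℕ) = (i : ℕ) + e then (1:F) else 0) *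
        (if (j : ℕ) = (l : ℕ) + 1 then 1 else 0)
        = (if (l : ℕ) = (i : ℕ) + e then (1:F) else 0) *
          (if (j : ℕ) = (i : ℕ) + e + 1 then 1 else 0) := by
      intro l
      rcases eq_or_ne (l : ℕ) ((i : ℕ) + e) with h | h
      · rw [h]
      · rw [if_neg h, zero_mul, zero_mul]
    rw [Finset.sum_congr rfl fun l _ => step l,
      sum_delta_mul ((i : ℕ) + e) (fun _ => if (j : ℕ) = (i : ℕ) + e + 1 then (1:F) else 0)]
    split_ifs <;> first | (exfalso; omega) | rfl

lemma shiftM_pow_eq_zero {k e : ℕ} (h : k ≤ e) : (shiftM F k) ^ e = 0 := by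
  rw [shiftM_pow]
  ext i j
  simp only [Matrix.of_apply, Matrix.zero_apply]
  rw [if_neg (by omega)]

lemma jordanBlock_pow_charPow (p : ℕ) [CharP F p] (hp : p.Prime) (m k : ℕ) (hk : 0 < k) :
    (jordanBlock F k) ^ (p ^ m) = 1 + (shiftM F k) ^ (p ^ m) := by
  haveI : Fact p.Prime := ⟨hp⟩
  haveI : Nonempty (Fin k) := ⟨⟨0, hk⟩⟩
  rw [jordan_eq_one_add, add_pow_char_pow_of_commute p m (Commute.one_left (shiftM F k)),
    one_pow]

lemma jordan_pow_eq_one (p : ℕ) [CharP F p] (hp : p.Prime) (m k : ℕ) (hk : 0 < k)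
    (hkq : k ≤ p ^ m) : (jordanBlock F k) ^ (p ^ m) = 1 := by
  rw [jordanBlock_pow_charPow p hp m k hk, shiftM_pow_eq_zero hkq, add_zero]

lemma kronecker_pow {a b : ℕ} (A : Matrix (Fin a) (Fin a) F) (B : Matrix (Fin b) (Fin b) F)
    (e : ℕ) : (A ⊗ₖ B) ^ e = (A ^ e) ⊗ₖ (B ^ e) := by
  induction e with
  | zero => simp [Matrix.one_kronecker_one]
  | succ e ih => rw [pow_succ, pow_succ, pow_succ, ih, Matrix.mul_kronecker_mul]

/-- inclusion of the first `s` coordinates -/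
def incM (F : Type*) [Zero F] [One F] (s q : ℕ) : Matrix (Fin (s + q)) (Fin s) F :=
  Matrix.of fun i b => if (i : ℕ) = (b : ℕ) then 1 else 0

/-- projection onto coordinates `q, …, s+q-1` -/
def prM (F : Type*) [Zero F] [One F] (s q : ℕ) : Matrix (Fin s) (Fin (s + q)) F :=
  Matrix.of fun b j => if (j : ℕ) = (b : ℕ) + q then 1 else 0

lemma shift_pow_eq_inc_mul_pr (s q : ℕ) :
    (shiftM F (s + q)) ^ q = incM F s q * prM F s q := by
  rw [shiftM_pow]
  ext i j
  rw [Matrix.mul_apply]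
  simp only [incM, prM, Matrix.of_apply]
  have step : ∀ b : Fin s, (if (i : ℕ) = (b : ℕ) then (1:F) else 0) *
      (if (j : ℕ) = (b : ℕ) + q then 1 else 0)
      = (if (b : ℕ) = (i : ℕ) then (1:F) else 0) *
        (if (j : ℕ) = (i : ℕ) + q then 1 else 0) := by
    intro b
    rcases eq_or_ne (i : ℕ) (b : ℕ) with h | h
    · rw [if_pos h, if_pos h.symm, h]
    · rw [if_neg h, if_neg (Ne.symm h), zero_mul, zero_mul]
  rw [Finset.sum_congr rfl fun b _ => step b,
    sum_delta_mul (i : ℕ) (fun _ => if (j : ℕ) = (i : ℕ) + q then (1:F) else 0)]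
  split_ifs <;> first | (exfalso; omega) | rfl

lemma pr_mul_transpose (s q : ℕ) : prM F s q * (prM F s q)ᵀ = (1 : Matrix (Fin s) (Fin s) F) := by
  ext b c
  rw [Matrix.mul_apply]
  simp only [prM, Matrix.of_apply, Matrix.transpose_apply, Matrix.one_apply]
  have step : ∀ j : Fin (s + q), (if (j : ℕ) = (b : ℕ) + q then (1:F) else 0) *
      (if (j : ℕ) = (c : ℕ) + q then 1 else 0)
      = (if (j : ℕ) = (b : ℕ) + q then (1:F) else 0) *
        (if (c : ℕ) = (b : ℕ) then 1 else 0) := by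
    intro j
    rcases eq_or_ne (j : ℕ) ((b : ℕ) + q) with h | h
    · rw [h]; congr 1; split_ifs <;> first | (exfalso; omega) | rfl
    · rw [if_neg h, zero_mul, zero_mul]
  rw [Finset.sum_congr rfl fun j _ => step j,
    sum_delta_mul ((b : ℕ) + q) (fun _ => if (c : ℕ) = (b : ℕ) then (1:F) else 0)]
  have hb : (b : ℕ) + q < s + q := by omega
  rw [dif_pos hb]
  split_ifs <;> first | (exfalso; omega) | rfl | (exfalso; simp_all [Fin.ext_iff])

lemma transpose_mul_inc (s q : ℕ) :
    (incM F s q)ᵀ * incM F s q = (1 : Matrix (Fin s) (Fin s) F) := by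
  ext b c
  rw [Matrix.mul_apply]
  simp only [incM, Matrix.of_apply, Matrix.transpose_apply, Matrix.one_apply]
  have step : ∀ j : Fin (s + q), (if (j : ℕ) = (b : ℕ) then (1:F) else 0) *
      (if (j : ℕ) = (c : ℕ) then 1 else 0)
      = (if (j : ℕ) = (b : ℕ) then (1:F) else 0) *
        (if (c : ℕ) = (b : ℕ) then 1 else 0) := by
    intro j
    rcases eq_or_ne (j : ℕ) (b : ℕ) with h | h
    · rw [h]; congr 1; split_ifs <;> first | (exfalso; omega) | rfl
    · rw [if_neg h, zero_mul, zero_mul]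
  rw [Finset.sum_congr rfl fun j _ => step j,
    sum_delta_mul (b : ℕ) (fun _ => if (c : ℕ) = (b : ℕ) then (1:F) else 0)]
  have hb : (b : ℕ) < s + q := by omega
  rw [dif_pos hb]
  split_ifs <;> first | (exfalso; omega) | rfl | (exfalso; simp_all [Fin.ext_iff])

lemma jordan_mul_inc (s q : ℕ) :
    jordanBlock F (s + q) * incM F s q = incM F s q * jordanBlock F s := by
  ext i b
  rw [Matrix.mul_apply, Matrix.mul_apply]
  simp only [incM, Matrix.of_apply]
  have stepL : ∀ j : Fin (s + q), jordanBlock F (s + q) i j *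
      (if (j : ℕ) = (b : ℕ) then (1:F) else 0)
      = (if (j : ℕ) = (b : ℕ) then (1:F) else 0) *
        (if (b : ℕ) = (i : ℕ) then 1 else if (b : ℕ) = (i : ℕ) + 1 then 1 else 0) := by
    intro j
    rcases eq_or_ne (j : ℕ) (b : ℕ) with h | h
    · rw [if_pos h, mul_one, one_mul, jordanBlock_apply, h]
    · rw [if_neg h, mul_zero, zero_mul]
  have stepR : ∀ c : Fin s, (if (i : ℕ) = (c : ℕ) then (1:F) else 0) * jordanBlock F s c b
      = (if (c : ℕ) = (i : ℕ) then (1:F) else 0) *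
        (if (b : ℕ) = (i : ℕ) then 1 else if (b : ℕ) = (i : ℕ) + 1 then 1 else 0) := by
    intro c
    rcases eq_or_ne (i : ℕ) (c : ℕ) with h | h
    · rw [if_pos h, if_pos h.symm, one_mul, one_mul, jordanBlock_apply, h]
    · rw [if_neg h, if_neg (Ne.symm h), zero_mul, zero_mul]
  rw [Finset.sum_congr rfl fun j _ => stepL j,
    Finset.sum_congr rfl fun c _ => stepR c,
    sum_delta_mul (b : ℕ)
      (fun _ => if (b : ℕ) = (i : ℕ) then (1:F) else if (b : ℕ) = (i : ℕ) + 1 then 1 else 0),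
    sum_delta_mul (i : ℕ)
      (fun _ => if (b : ℕ) = (i : ℕ) then (1:F) else if (b : ℕ) = (i : ℕ) + 1 then 1 else 0)]
  split_ifs <;> first | (exfalso; omega) | rfl

section RankLemmas

variable {l m n o : Type*} [Fintype l] [Fintype m] [Fintype n] [Fintype o]
  [DecidableEq m] [DecidableEq n] [DecidableEq o]

lemma inj_of_left_inverse {A : Matrix m n F} {L : Matrix n m F} (h : L * A = 1) :
    Function.Injective A.mulVecLin := by
  intro v w hvw
  have h2 : (L * A).mulVecLin v = (L * A).mulVecLin w := by
    rw [Matrix.mulVecLin_mul]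
    simp only [LinearMap.comp_apply, hvw]
  rw [h] at h2
  simpa using h2

lemma surj_of_right_inverse {A : Matrix m n F} {R : Matrix n m F} (h : A * R = 1) :
    Function.Surjective A.mulVecLin := by
  intro y
  refine ⟨R.mulVecLin y, ?_⟩
  have h2 : (A * R).mulVecLin y = y := by rw [h]; simp
  rw [Matrix.mulVecLin_mul] at h2
  simpa using h2

lemma rank_mul_right_of_surjective (A : Matrix m n F) (B : Matrix n o F)
    (hB : Function.Surjective B.mulVecLin) : (A * B).rank = A.rank := by
  unfold Matrix.rank
  rw [Matrix.mulVecLin_mul, LinearMap.range_comp, LinearMap.range_eq_top.mpr hB,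
    Submodule.map_top]

lemma rank_mul_left_of_injective (A : Matrix m n F) (B : Matrix n o F)
    (hA : Function.Injective A.mulVecLin) : (A * B).rank = B.rank := by
  unfold Matrix.rank
  rw [Matrix.mulVecLin_mul, LinearMap.range_comp]
  exact (LinearEquiv.finrank_eq (Submodule.equivMapOfInjective _ hA _)).symm

end RankLemmas

/-- The core periodicity step: increasing `s` by `p^m` shifts the rank sequence by `p^m`. -/
lemma core (p : ℕ) [CharP F p] (hp : p.Prime) (m r s t : ℕ) (hr : 1 ≤ r)
    (hrq : r ≤ p ^ m) (hs : r ≤ s) :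
    ((jordanBlock F r ⊗ₖ jordanBlock F (s + p ^ m) - 1) ^ (p ^ m + t)).rank
      = ((jordanBlock F r ⊗ₖ jordanBlock F s - 1) ^ t).rank := by
  haveI : Fact p.Prime := ⟨hp⟩
  haveI : Nonempty (Fin r) := ⟨⟨0, hr⟩⟩
  haveI : Nonempty (Fin (s + p ^ m)) := ⟨⟨0, by omega⟩⟩
  set J := jordanBlock F r ⊗ₖ jordanBlock F (s + p ^ m) with hJ
  set P := (1 : Matrix (Fin r) (Fin r) F) ⊗ₖ incM F s (p ^ m) with hP
  set Q := (1 : Matrix (Fin r) (Fin r) F) ⊗ₖ prM F s (p ^ m) with hQ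
  -- N^q = P * Q
  have hPQ : P * Q = (1 : Matrix (Fin r) (Fin r) F) ⊗ₖ ((shiftM F (s + p ^ m)) ^ (p ^ m)) := by
    rw [hP, hQ, ← Matrix.mul_kronecker_mul, Matrix.one_mul, shift_pow_eq_inc_mul_pr]
  have hNq : (J - 1) ^ (p ^ m) = P * Q := by
    rw [hPQ, hJ, sub_pow_char_pow_of_commute p m (Commute.one_right _), one_pow, kronecker_pow,
      jordan_pow_eq_one p hp m r hr hrq,
      jordanBlock_pow_charPow p hp m (s + p ^ m) (by omega),
      Matrix.kronecker_add, Matrix.one_kronecker_one, add_sub_cancel_left]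
  -- intertwining
  have hTP : J * P = P * (jordanBlock F r ⊗ₖ jordanBlock F s) := by
    rw [hJ, hP, ← Matrix.mul_kronecker_mul, ← Matrix.mul_kronecker_mul, Matrix.mul_one,
      Matrix.one_mul, jordan_mul_inc]
  have hJP : (J - 1) * P = P * (jordanBlock F r ⊗ₖ jordanBlock F s - 1) := by
    rw [Matrix.sub_mul, Matrix.mul_sub, Matrix.one_mul, Matrix.mul_one, hTP]
  have hJPt : ∀ t : ℕ, (J - 1) ^ t * P = P * (jordanBlock F r ⊗ₖ jordanBlock F s - 1) ^ t := by
    intro t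
    induction t with
    | zero => rw [pow_zero, pow_zero, Matrix.one_mul, Matrix.mul_one]
    | succ t ih =>
      rw [pow_succ, pow_succ, Matrix.mul_assoc, hJP, ← Matrix.mul_assoc, ih, Matrix.mul_assoc]
  have hQsurj : Function.Surjective Q.mulVecLin := by
    apply surj_of_right_inverse (R := (1 : Matrix (Fin r) (Fin r) F) ⊗ₖ (prM F s (p ^ m))ᵀ)
    rw [hQ, ← Matrix.mul_kronecker_mul, one_mul, pr_mul_transpose, Matrix.one_kronecker_one]
  have hPinj : Function.Injective P.mulVecLin := by
    apply inj_of_left_inverse (L := (1 : Matrix (Fin r) (Fin r) F) ⊗ₖ (incM F s (p ^ m))ᵀ)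
    rw [hP, ← Matrix.mul_kronecker_mul, one_mul, transpose_mul_inc, Matrix.one_kronecker_one]
  calc ((J - 1) ^ (p ^ m + t)).rank
      = ((J - 1) ^ t * P * Q).rank := by
        rw [add_comm (p ^ m) t, pow_add, hNq, Matrix.mul_assoc]
    _ = ((J - 1) ^ t * P).rank := rank_mul_right_of_surjective _ _ hQsurj
    _ = (P * (jordanBlock F r ⊗ₖ jordanBlock F s - 1) ^ t).rank := by rw [hJPt]
    _ = ((jordanBlock F r ⊗ₖ jordanBlock F s - 1) ^ t).rank :=
        rank_mul_left_of_injective _ _ hPinj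

lemma chain (p : ℕ) [CharP F p] (hp : p.Prime) (m r s : ℕ) (hr : 1 ≤ r)
    (hrq : r ≤ p ^ m) (hs : r ≤ s) (c : ℕ) :
    ∀ k : ℕ, ((jordanBlock F r ⊗ₖ jordanBlock F (s + p ^ m * c) - 1) ^ (p ^ m * c + k)).rank
      = ((jordanBlock F r ⊗ₖ jordanBlock F s - 1) ^ k).rank := by
  induction c with
  | zero =>
    intro k
    have e1 : s + p ^ m * 0 = s := by ring
    have e2 : p ^ m * 0 + k = k := by ring
    rw [e1, e2]
  | succ c ih =>
    intro k
    have e1 : s + p ^ m * (c + 1) = s + p ^ m * c + p ^ m := by ring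
    have e2 : p ^ m * (c + 1) + k = p ^ m + (p ^ m * c + k) := by ring
    rw [e1, e2, core p hp m r (s + p ^ m * c) (p ^ m * c + k) hr hrq (by omega), ih]

section Counting

lemma sum_sub_succ {r : ℕ} (lam : Fin r → ℕ) (k : ℕ) :
    ∑ i, (lam i - k)
      = (∑ i, (lam i - (k + 1))) + (Finset.univ.filter fun i => k + 1 ≤ lam i).card := by
  rw [Finset.card_filter, ← Finset.sum_add_distrib]
  apply Finset.sum_congr rfl
  intro i _
  split_ifs <;> omega

lemma antitone_mem_iff {r : ℕ} {lam : Fin r → ℕ} (h : Antitone lam) (k : ℕ) (i : Fin r) :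
    k ≤ lam i ↔ (i : ℕ) < (Finset.univ.filter fun j => k ≤ lam j).card := by
  constructor
  · intro hi
    have hsub : Finset.Iic i ⊆ Finset.univ.filter fun j => k ≤ lam j := by
      intro j hj
      simp only [Finset.mem_Iic] at hj
      simp only [Finset.mem_filter, Finset.mem_univ, true_and]
      exact le_trans hi (h hj)
    have := Finset.card_le_card hsub
    rw [Fin.card_Iic] at this
    omega
  · intro hi
    by_contra hc
    have hsub : (Finset.univ.filter fun j => k ≤ lam j) ⊆ Finset.Iio i := by
      intro j hj
      simp only [Finset.mem_filter, Finset.mem_univ, true_and] at hj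
      simp only [Finset.mem_Iio]
      by_contra hji
      exact hc (le_trans hj (h (le_of_not_gt hji)))
    have := Finset.card_le_card hsub
    rw [Fin.card_Iio] at this
    omega

end Counting

/-- Main helper, with `s ≤ s'`. -/
lemma key (F : Type*) [Field F] (p : ℕ) [CharP F p] (hp : p.Prime)
    (m r s s' : ℕ) (hr : 1 ≤ r) (hrpm : r ≤ p ^ m) (hs : r ≤ s) (hs' : r ≤ s')
    (hss' : s ≤ s') (hcong : s % p ^ m = s' % p ^ m)
    (lam lam' : Fin r → ℕ)
    (h1 : IsJordanSeq (jordanBlock F r ⊗ₖ jordanBlock F s) lam)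
    (h2 : IsJordanSeq (jordanBlock F r ⊗ₖ jordanBlock F s') lam') :
    ∀ i : Fin r, lam' i = lam i + (s' - s) := by
  obtain ⟨c, hc⟩ : p ^ m ∣ s' - s := (Nat.modEq_iff_dvd' hss').mp hcong
  have hs'' : s' = s + p ^ m * c := by omega
  subst hs''
  obtain ⟨hanti, hpos, hrank⟩ := h1
  obtain ⟨hanti', hpos', hrank'⟩ := h2
  have hR : ∀ k : ℕ, ∑ i, (lam' i - (p ^ m * c + k)) = ∑ i, (lam i - k) := by
    intro k
    rw [← hrank, ← hrank', chain p hp m r s hr hrpm hs c k]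
  have hcard : ∀ k : ℕ,
      (Finset.univ.filter fun i => p ^ m * c + k + 1 ≤ lam' i).card
        = (Finset.univ.filter fun i => k + 1 ≤ lam i).card := by
    intro k
    have a1 := sum_sub_succ lam k
    have a2 := sum_sub_succ lam' (p ^ m * c + k)
    have a3 := hR k
    have a4 := hR (k + 1)
    have e : p ^ m * c + (k + 1) = p ^ m * c + k + 1 := by ring
    rw [e] at a4
    omega
  have hall : ∀ i : Fin r, p ^ m * c + 1 ≤ lam' i := by
    have h0 : (Finset.univ.filter fun i => 0 + 1 ≤ lam i).card = r := by
      rw [Finset.filter_true_of_mem (fun i _ => by have := hpos i; omega)]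
      simp
    have h0' := hcard 0
    rw [h0] at h0'
    have h0'' : (Finset.univ.filter fun i => p ^ m * c + 1 ≤ lam' i).card = r := by
      simpa using h0'
    intro i
    rw [antitone_mem_iff hanti', h0'']
    exact i.isLt
  intro i
  have hiff : ∀ k : ℕ, k + 1 ≤ lam i ↔ p ^ m * c + k + 1 ≤ lam' i := by
    intro k
    rw [antitone_mem_iff hanti (k + 1) i, antitone_mem_iff hanti' (p ^ m * c + k + 1) i,
      hcard k]
  have h1i : p ^ m * c + (lam i - 1) + 1 ≤ lam' i := by
    apply (hiff (lam i - 1)).mp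
    have := hpos i
    omega
  have h2i : ¬ (p ^ m * c + lam i + 1 ≤ lam' i) := by
    intro hcontra
    have := (hiff (lam i)).mpr hcontra
    omega
  have := hpos i
  omega

end Stmt13Aux

open Stmt13Aux in
/-- Periodicity: if `r ≤ min{s, s', p^m}` and `s ≡ s' (mod p^m)`, then the
deviation vectors coincide: `λ_i(r,s,p) - s = λ_i(r,s',p) - s'` for all `i`. -/
theorem stmt13 (F : Type*) [Field F] (p : ℕ) [CharP F p] (hp : p.Prime)
    (m r s s' : ℕ) (hr : 1 ≤ r) (hrpm : r ≤ p ^ m) (hs : r ≤ s) (hs' : r ≤ s')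
    (hcong : s % p ^ m = s' % p ^ m)
    (lam lam' : Fin r → ℕ)
    (h1 : IsJordanSeq (jordanBlock F r ⊗ₖ jordanBlock F s) lam)
    (h2 : IsJordanSeq (jordanBlock F r ⊗ₖ jordanBlock F s') lam') :
    ∀ i : Fin r, (lam i : ℤ) - (s : ℤ) = (lam' i : ℤ) - (s' : ℤ) := by
  intro i
  rcases le_total s s' with h | h
  · have := key F p hp m r s s' hr hrpm hs hs' h hcong lam lam' h1 h2 i
    omega
  · have := key F p hp m r s' s hr hrpm hs' hs h hcong.symm lam' lam h2 h1 i
    omega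
end
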